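/- arXiv:2206.02898 — 5 statements merged into one kernel-verified Lean document; each statement's English description precedes it below -/
import Mathlib

section
/- For all α, β > 0, x₁, x₂ ∈ ℝ, and all (x,t) ∈ ℝ², the breather and its primitive satisfy the identity ∂_x² B̃_{α,β}(x,t;x₁,x₂) + ∂_t 𝔅_{α,β}(x,t) + B̃_{α,β}(x,t;x₁,x₂)³ = 0. -/
open Real Filter MeasureTheory

/-- The mKdV breather `B̃_{α,β}(x,t;x₁,x₂)`, with
`y₁ = x + (α² − 3β²)t + x₁` and `y₂ = x + (3α² − β²)t + x₂`. -/
noncomputable def breather (α β x₁ x₂ x t : ℝ) : ℝ :=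
  2 * Real.sqrt 2 * β * (1 / Real.cosh (β * (x + (3*α^2 - β^2)*t + x₂))) *
      ((Real.cos (α * (x + (α^2 - 3*β^2)*t + x₁)) -
        (β/α) * Real.sin (α * (x + (α^2 - 3*β^2)*t + x₁)) *
          Real.tanh (β * (x + (3*α^2 - β^2)*t + x₂))) /
        (1 + (β/α)^2 * (Real.sin (α * (x + (α^2 - 3*β^2)*t + x₁)))^2 *
          (1 / Real.cosh (β * (x + (3*α^2 - β^2)*t + x₂)))^2))

/-- The breather primitive `𝔅_{α,β}(x,t) = 2√2 arctan((β/α) sin(α y₁)/cosh(β y₂))`. -/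
noncomputable def breatherPrim (α β x₁ x₂ x t : ℝ) : ℝ :=
  2 * Real.sqrt 2 * Real.arctan ((β/α) * Real.sin (α * (x + (α^2 - 3*β^2)*t + x₁)) /
    Real.cosh (β * (x + (3*α^2 - β^2)*t + x₂)))

namespace BreatherProof

/-- `u = (β/α) sin(α y₁)/cosh(β y₂)`. -/
noncomputable def UU (α β x₁ x₂ t x : ℝ) : ℝ :=
  β/α * Real.sin (α * (x + (α^2 - 3*β^2)*t + x₁)) /
    Real.cosh (β * (x + (3*α^2 - β^2)*t + x₂))

/-- first x-derivative of `u` -/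
noncomputable def P1 (α β x₁ x₂ t x : ℝ) : ℝ :=
  β/α * (α * Real.cos (α * (x + (α^2 - 3*β^2)*t + x₁)) *
      Real.cosh (β * (x + (3*α^2 - β^2)*t + x₂)) -
    β * Real.sin (α * (x + (α^2 - 3*β^2)*t + x₁)) *
      Real.sinh (β * (x + (3*α^2 - β^2)*t + x₂))) /
    (Real.cosh (β * (x + (3*α^2 - β^2)*t + x₂)) *
      Real.cosh (β * (x + (3*α^2 - β^2)*t + x₂)))

/-- second x-derivative of `u` -/
noncomputable def P2 (α β x₁ x₂ t x : ℝ) : ℝ :=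
  β/α * (-(α^2+β^2) * Real.sin (α * (x + (α^2 - 3*β^2)*t + x₁)) *
      (Real.cosh (β * (x + (3*α^2 - β^2)*t + x₂)) *
        Real.cosh (β * (x + (3*α^2 - β^2)*t + x₂))) -
    2*α*β * Real.cos (α * (x + (α^2 - 3*β^2)*t + x₁)) *
      Real.cosh (β * (x + (3*α^2 - β^2)*t + x₂)) *
      Real.sinh (β * (x + (3*α^2 - β^2)*t + x₂)) +
    2*β^2 * Real.sin (α * (x + (α^2 - 3*β^2)*t + x₁)) *
      (Real.sinh (β * (x + (3*α^2 - β^2)*t + x₂)) *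
        Real.sinh (β * (x + (3*α^2 - β^2)*t + x₂)))) /
    (Real.cosh (β * (x + (3*α^2 - β^2)*t + x₂)) *
      Real.cosh (β * (x + (3*α^2 - β^2)*t + x₂)) *
      Real.cosh (β * (x + (3*α^2 - β^2)*t + x₂)))

/-- third x-derivative of `u` -/
noncomputable def P3 (α β x₁ x₂ t x : ℝ) : ℝ :=
  β/α * ((-(α*(α^2+3*β^2)) * Real.cos (α * (x + (α^2 - 3*β^2)*t + x₁)) *
      (Real.cosh (β * (x + (3*α^2 - β^2)*t + x₂)) *
        Real.cosh (β * (x + (3*α^2 - β^2)*t + x₂))) +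
    2*β^3 * Real.sin (α * (x + (α^2 - 3*β^2)*t + x₁)) *
      Real.cosh (β * (x + (3*α^2 - β^2)*t + x₂)) *
      Real.sinh (β * (x + (3*α^2 - β^2)*t + x₂))) *
      Real.cosh (β * (x + (3*α^2 - β^2)*t + x₂)) -
    3*β * Real.sinh (β * (x + (3*α^2 - β^2)*t + x₂)) *
      (-(α^2+β^2) * Real.sin (α * (x + (α^2 - 3*β^2)*t + x₁)) *
        (Real.cosh (β * (x + (3*α^2 - β^2)*t + x₂)) *
          Real.cosh (β * (x + (3*α^2 - β^2)*t + x₂))) -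
      2*α*β * Real.cos (α * (x + (α^2 - 3*β^2)*t + x₁)) *
        Real.cosh (β * (x + (3*α^2 - β^2)*t + x₂)) *
        Real.sinh (β * (x + (3*α^2 - β^2)*t + x₂)) +
      2*β^2 * Real.sin (α * (x + (α^2 - 3*β^2)*t + x₁)) *
        (Real.sinh (β * (x + (3*α^2 - β^2)*t + x₂)) *
          Real.sinh (β * (x + (3*α^2 - β^2)*t + x₂))))) /
    (Real.cosh (β * (x + (3*α^2 - β^2)*t + x₂)) *
      Real.cosh (β * (x + (3*α^2 - β^2)*t + x₂)) *
      Real.cosh (β * (x + (3*α^2 - β^2)*t + x₂)) *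
      Real.cosh (β * (x + (3*α^2 - β^2)*t + x₂)))

/-- t-derivative of `u` -/
noncomputable def PT (α β x₁ x₂ t x : ℝ) : ℝ :=
  β/α * ((α^2-3*β^2)*α * Real.cos (α * (x + (α^2 - 3*β^2)*t + x₁)) *
      Real.cosh (β * (x + (3*α^2 - β^2)*t + x₂)) -
    (3*α^2-β^2)*β * Real.sin (α * (x + (α^2 - 3*β^2)*t + x₁)) *
      Real.sinh (β * (x + (3*α^2 - β^2)*t + x₂))) /
    (Real.cosh (β * (x + (3*α^2 - β^2)*t + x₂)) *
      Real.cosh (β * (x + (3*α^2 - β^2)*t + x₂)))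

lemma hy1 (α β x₁ t x : ℝ) :
    HasDerivAt (fun y : ℝ => α * (y + (α^2 - 3*β^2)*t + x₁)) α x := by
  simpa using (((hasDerivAt_id x).add_const ((α^2 - 3*β^2)*t)).add_const x₁).const_mul α

lemma hy2 (α β x₂ t x : ℝ) :
    HasDerivAt (fun y : ℝ => β * (y + (3*α^2 - β^2)*t + x₂)) β x := by
  simpa using (((hasDerivAt_id x).add_const ((3*α^2 - β^2)*t)).add_const x₂).const_mul β

lemma coshne (y : ℝ) : Real.cosh y ≠ 0 := (Real.cosh_pos (x := y)).ne'

lemma hUU (α β x₁ x₂ t x : ℝ) (hα : α ≠ 0) :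
    HasDerivAt (fun y => UU α β x₁ x₂ t y) (P1 α β x₁ x₂ t x) x := by
  unfold UU P1
  have h := (((hy1 α β x₁ t x).sin.const_mul (β/α)).div
    ((hy2 α β x₂ t x).cosh) (coshne _))
  refine h.congr_deriv ?_
  have hc := coshne (β * (x + (3*α^2 - β^2)*t + x₂))
  field_simp

lemma hP1 (α β x₁ x₂ t x : ℝ) (hα : α ≠ 0) :
    HasDerivAt (fun y => P1 α β x₁ x₂ t y) (P2 α β x₁ x₂ t x) x := by
  unfold P1 P2
  have hnum := ((((hy1 α β x₁ t x).cos.const_mul α).mul ((hy2 α β x₂ t x).cosh)).sub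
    (((hy1 α β x₁ t x).sin.const_mul β).mul ((hy2 α β x₂ t x).sinh))).const_mul (β/α)
  have hden := ((hy2 α β x₂ t x).cosh).mul ((hy2 α β x₂ t x).cosh)
  have h := hnum.div hden (mul_ne_zero (coshne _) (coshne _))
  refine h.congr_deriv ?_
  have hc := coshne (β * (x + (3*α^2 - β^2)*t + x₂))
  simp only [Pi.mul_apply, Pi.div_apply, Pi.pow_apply, Pi.sub_apply, Pi.add_apply]
  field_simp
  ring

lemma hP2 (α β x₁ x₂ t x : ℝ) (hα : α ≠ 0) :
    HasDerivAt (fun y => P2 α β x₁ x₂ t y) (P3 α β x₁ x₂ t x) x := by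
  unfold P2 P3
  have hnum := (((((hy1 α β x₁ t x).sin.const_mul (-(α^2+β^2))).mul
      (((hy2 α β x₂ t x).cosh).mul ((hy2 α β x₂ t x).cosh))).sub
    ((((hy1 α β x₁ t x).cos.const_mul (2*α*β)).mul ((hy2 α β x₂ t x).cosh)).mul
      ((hy2 α β x₂ t x).sinh))).add
    (((hy1 α β x₁ t x).sin.const_mul (2*β^2)).mul
      (((hy2 α β x₂ t x).sinh).mul ((hy2 α β x₂ t x).sinh)))).const_mul (β/α)
  have hden := (((hy2 α β x₂ t x).cosh).mul ((hy2 α β x₂ t x).cosh)).mul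
    ((hy2 α β x₂ t x).cosh)
  have h := hnum.div hden (mul_ne_zero (mul_ne_zero (coshne _) (coshne _)) (coshne _))
  refine h.congr_deriv ?_
  have hc := coshne (β * (x + (3*α^2 - β^2)*t + x₂))
  simp only [Pi.mul_apply, Pi.div_apply, Pi.pow_apply, Pi.sub_apply, Pi.add_apply]
  field_simp
  ring

lemma master (a b s c sh ch : ℝ) (ha : a ≠ 0) (hch : ch ≠ 0)
    (h1 : s^2 + c^2 = 1) (h2 : ch^2 - sh^2 = 1) :
    (b/a * ((-(a*(a^2+3*b^2)) * c * (ch*ch) + 2*b^3*s*ch*sh) * ch -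
        3*b*sh*(-(a^2+b^2)*s*(ch*ch) - 2*a*b*c*ch*sh + 2*b^2*s*(sh*sh))) /
        (ch*ch*ch*ch) +
      b/a * ((a^2-3*b^2)*a*c*ch - (3*a^2-b^2)*b*s*sh) / (ch*ch)) *
      (1 + (b/a*s/ch)^2) +
    6 * (b/a*(a*c*ch - b*s*sh)/(ch*ch)) *
      ((b/a*(a*c*ch - b*s*sh)/(ch*ch))^2 -
        (b/a*s/ch) * (b/a*(-(a^2+b^2)*s*(ch*ch) - 2*a*b*c*ch*sh + 2*b^2*s*(sh*sh))/(ch*ch*ch))) = 0 := by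
  field_simp
  linear_combination (-6*a^2*b^4*s*sh*ch^2 + 6*a^3*b^3*c*ch^3)*h1 +
    (6*a^2*b^4*s*sh*ch^2 - 6*a^3*b^3*c*ch^3)*h2

lemma final_alg (r u p q w v : ℝ) (hr : r^2 = 2) (hd : 1 + u*u ≠ 0)
    (hm : (w + v)*(1 + u^2) + 6*p*(p^2 - u*q) = 0) :
    2*r*((w*(1+u*u)^2 - 6*u*p*q*(1+u*u) - 2*p^3*(1+u*u) + 8*u^2*p^3)/(1+u*u)^3) +
      2*r*(v/(1+u^2)) + (2*r*(p/(1+u*u)))^3 = 0 := by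
  have hd2 : (1:ℝ) + u^2 ≠ 0 := by rw [sq]; exact hd
  have hr3 : r^3 = 2*r := by rw [pow_succ, hr]
  have key : 2*r*((w*(1+u*u)^2 - 6*u*p*q*(1+u*u) - 2*p^3*(1+u*u) + 8*u^2*p^3)/(1+u*u)^3) +
      2*r*(v/(1+u^2)) + (2*r*(p/(1+u*u)))^3 =
      2*r*(((w + v)*(1 + u^2) + 6*p*(p^2 - u*q)) / (1+u*u)^2) +
        (r^3 - 2*r)*(8*p^3/(1+u*u)^3) := by
    field_simp
    ring
  rw [key, hm, hr3]
  ring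

/-- `B̃ = 2√2 u_x/(1+u²)` -/
noncomputable def Bfun (α β x₁ x₂ t : ℝ) : ℝ → ℝ := fun x =>
  2*Real.sqrt 2*(P1 α β x₁ x₂ t x/(1 + UU α β x₁ x₂ t x*UU α β x₁ x₂ t x))

noncomputable def B2fun (α β x₁ x₂ t : ℝ) : ℝ → ℝ := fun x =>
  2*Real.sqrt 2*((P2 α β x₁ x₂ t x*(1 + UU α β x₁ x₂ t x*UU α β x₁ x₂ t x) -
    P1 α β x₁ x₂ t x*(P1 α β x₁ x₂ t x*UU α β x₁ x₂ t x + UU α β x₁ x₂ t x*P1 α β x₁ x₂ t x))/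
    (1 + UU α β x₁ x₂ t x*UU α β x₁ x₂ t x)^2)

noncomputable def B3v (α β x₁ x₂ t x : ℝ) : ℝ :=
  2*Real.sqrt 2*((P3 α β x₁ x₂ t x*(1+UU α β x₁ x₂ t x*UU α β x₁ x₂ t x)^2 -
    6*UU α β x₁ x₂ t x*P1 α β x₁ x₂ t x*P2 α β x₁ x₂ t x*(1+UU α β x₁ x₂ t x*UU α β x₁ x₂ t x) -
    2*(P1 α β x₁ x₂ t x)^3*(1+UU α β x₁ x₂ t x*UU α β x₁ x₂ t x) +
    8*(UU α β x₁ x₂ t x)^2*(P1 α β x₁ x₂ t x)^3)/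
    (1+UU α β x₁ x₂ t x*UU α β x₁ x₂ t x)^3)

lemma hD0 (α β x₁ x₂ t x : ℝ) : 1 + UU α β x₁ x₂ t x*UU α β x₁ x₂ t x ≠ 0 := by
  have h : (0:ℝ) < 1 + UU α β x₁ x₂ t x*UU α β x₁ x₂ t x := by
    nlinarith [mul_self_nonneg (UU α β x₁ x₂ t x)]
  exact h.ne'

lemma bform (a b S C Sh Ch : ℝ) (ha : a ≠ 0) (hc : Ch ≠ 0) :
    2 * Real.sqrt 2 * b * (1/Ch) * ((C - b/a*S*(Sh/Ch))/(1 + (b/a)^2*S^2*(1/Ch)^2)) =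
      2*Real.sqrt 2*((b/a*(a*C*Ch - b*S*Sh)/(Ch*Ch))/(1 + (b/a*S/Ch)*(b/a*S/Ch))) := by
  have hbig : a^2*Ch^2 + b^2*S^2 ≠ 0 := by
    intro h
    exact mul_ne_zero (pow_ne_zero 2 ha) (pow_ne_zero 2 hc)
      (by nlinarith [sq_nonneg (b*S), sq_nonneg (a*Ch)])
  have hd : 1 + (b/a)^2 * S^2 * (1/Ch)^2 ≠ 0 := by positivity
  have hd2 : 1 + (b/a*S/Ch)*(b/a*S/Ch) ≠ 0 := by
    intro h
    have hq : ((a*Ch)^2 + (b*S)^2) / (a*Ch)^2 = 0 := by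
      rw [← h]; field_simp
    rw [div_eq_zero_iff] at hq
    rcases hq with hq | hq
    · exact hbig (by nlinarith [hq])
    · exact pow_ne_zero 2 (mul_ne_zero ha hc) hq
  rw [show 2 * Real.sqrt 2 * b * (1/Ch) * ((C - b/a*S*(Sh/Ch))/(1 + (b/a)^2*S^2*(1/Ch)^2)) =
      (2 * Real.sqrt 2 * b * (1/Ch) * (C - b/a*S*(Sh/Ch)))/(1 + (b/a)^2*S^2*(1/Ch)^2) from by ring,
    show 2*Real.sqrt 2*((b/a*(a*C*Ch - b*S*Sh)/(Ch*Ch))/(1 + (b/a*S/Ch)*(b/a*S/Ch))) =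
      (2*Real.sqrt 2*(b/a*(a*C*Ch - b*S*Sh)/(Ch*Ch)))/(1 + (b/a*S/Ch)*(b/a*S/Ch)) from by ring,
    div_eq_div_iff hd hd2]
  field_simp

lemma breather_eq (α β x₁ x₂ t x : ℝ) (hα : α ≠ 0) :
    breather α β x₁ x₂ x t = Bfun α β x₁ x₂ t x := by
  unfold breather Bfun P1 UU
  rw [Real.tanh_eq_sinh_div_cosh]
  exact bform α β (Real.sin (α * (x + (α^2 - 3*β^2)*t + x₁)))
    (Real.cos (α * (x + (α^2 - 3*β^2)*t + x₁)))
    (Real.sinh (β * (x + (3*α^2 - β^2)*t + x₂)))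
    (Real.cosh (β * (x + (3*α^2 - β^2)*t + x₂))) hα (coshne _)

lemma hBfun (α β x₁ x₂ t x : ℝ) (hα : α ≠ 0) :
    HasDerivAt (Bfun α β x₁ x₂ t) (B2fun α β x₁ x₂ t x) x := by
  have hD := ((hUU α β x₁ x₂ t x hα).mul (hUU α β x₁ x₂ t x hα)).const_add 1
  have h := ((hP1 α β x₁ x₂ t x hα).div hD (hD0 α β x₁ x₂ t x)).const_mul (2*Real.sqrt 2)
  exact h

lemma hB2fun (α β x₁ x₂ t x : ℝ) (hα : α ≠ 0) :
    HasDerivAt (B2fun α β x₁ x₂ t) (B3v α β x₁ x₂ t x) x := by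
  have hu := hUU α β x₁ x₂ t x hα
  have hp1 := hP1 α β x₁ x₂ t x hα
  have hp2 := hP2 α β x₁ x₂ t x hα
  have hD := (hu.mul hu).const_add 1
  have hf2 := (hp2.mul hD).sub (hp1.mul ((hp1.mul hu).add (hu.mul hp1)))
  have hg2 := hD.pow 2
  have h := (hf2.div hg2 (pow_ne_zero 2 (hD0 α β x₁ x₂ t x))).const_mul (2*Real.sqrt 2)
  refine h.congr_deriv ?_
  unfold B3v
  have hd := hD0 α β x₁ x₂ t x
  push_cast
  simp only [Pi.mul_apply, Pi.div_apply, Pi.pow_apply, Pi.add_apply, Pi.sub_apply]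
  field_simp
  ring

lemma hPrim (α β x₁ x₂ t x : ℝ) (hα : α ≠ 0) :
    HasDerivAt (fun τ => breatherPrim α β x₁ x₂ x τ)
      (2*Real.sqrt 2*(PT α β x₁ x₂ t x/(1+(UU α β x₁ x₂ t x)^2))) t := by
  unfold breatherPrim
  have h1 : HasDerivAt (fun τ : ℝ => α*(x + (α^2-3*β^2)*τ + x₁)) (α*((α^2-3*β^2)*1)) t :=
    ((((hasDerivAt_id t).const_mul (α^2-3*β^2)).const_add x).add_const x₁).const_mul α
  have h2 : HasDerivAt (fun τ : ℝ => β*(x + (3*α^2-β^2)*τ + x₂)) (β*((3*α^2-β^2)*1)) t :=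
    ((((hasDerivAt_id t).const_mul (3*α^2-β^2)).const_add x).add_const x₂).const_mul β
  have hg := ((h1.sin.const_mul (β/α)).div h2.cosh (coshne _))
  have h := (hg.arctan).const_mul (2*Real.sqrt 2)
  refine h.congr_deriv ?_
  unfold PT UU
  have hc := coshne (β * (x + (3*α^2 - β^2)*t + x₂))
  have hp : 1 + (β/α * Real.sin (α * (x + (α^2 - 3*β^2)*t + x₁)) /
      Real.cosh (β * (x + (3*α^2 - β^2)*t + x₂)))^2 ≠ 0 := by positivity
  simp only [Pi.mul_apply, Pi.div_apply, Pi.pow_apply]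
  field_simp

end BreatherProof

theorem breather_second_order_identity (α β x₁ x₂ : ℝ) (hα : 0 < α) (hβ : 0 < β) :
    ∀ x t : ℝ,
      iteratedDeriv 2 (fun y => breather α β x₁ x₂ y t) x +
        deriv (fun τ => breatherPrim α β x₁ x₂ x τ) t +
        (breather α β x₁ x₂ x t) ^ 3 = 0 := by
  intro x t
  obtain ⟨hα', hβ'⟩ : α ≠ 0 ∧ β ≠ 0 := ⟨hα.ne', hβ.ne'⟩
  open BreatherProof in
  have hbe : ∀ y, breather α β x₁ x₂ y t = Bfun α β x₁ x₂ t y :=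
    fun y => breather_eq α β x₁ x₂ t y hα'
  have hfun : (fun y => breather α β x₁ x₂ y t) = Bfun α β x₁ x₂ t := funext hbe
  rw [iteratedDeriv_succ, iteratedDeriv_one, hfun]
  have hd1 : deriv (Bfun α β x₁ x₂ t) = B2fun α β x₁ x₂ t :=
    funext fun z => (hBfun α β x₁ x₂ t z hα').deriv
  rw [hd1, (hB2fun α β x₁ x₂ t x hα').deriv, (hPrim α β x₁ x₂ t x hα').deriv, hbe x]
  have hm : (P3 α β x₁ x₂ t x + PT α β x₁ x₂ t x)*(1+(UU α β x₁ x₂ t x)^2) +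
      6*P1 α β x₁ x₂ t x*((P1 α β x₁ x₂ t x)^2 - UU α β x₁ x₂ t x*P2 α β x₁ x₂ t x) = 0 := by
    have h := master α β (Real.sin (α * (x + (α^2 - 3*β^2)*t + x₁)))
      (Real.cos (α * (x + (α^2 - 3*β^2)*t + x₁)))
      (Real.sinh (β * (x + (3*α^2 - β^2)*t + x₂)))
      (Real.cosh (β * (x + (3*α^2 - β^2)*t + x₂))) hα' (coshne _)
      (Real.sin_sq_add_cos_sq _) (Real.cosh_sq_sub_sinh_sq _)
    unfold P3 PT UU P1 P2
    linear_combination h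
  have hr : (Real.sqrt 2)^2 = 2 := Real.sq_sqrt (by norm_num)
  have hfin := final_alg (Real.sqrt 2) (UU α β x₁ x₂ t x) (P1 α β x₁ x₂ t x)
    (P2 α β x₁ x₂ t x) (P3 α β x₁ x₂ t x) (PT α β x₁ x₂ t x) hr (hD0 α β x₁ x₂ t x) hm
  unfold B3v Bfun
  linear_combination hfin
end

section
/- For all α, β > 0, x₁, x₂ ∈ ℝ, and all (x,t) ∈ ℝ², the half mass integral of the breather admits the closed form: (1/2) ∫_{−∞}^{x} B̃_{α,β}(s,t;x₁,x₂)² ds = 2β[α² + β² + αβ sin(2α y₁) − β² cos(2α y₁) + α²(sinh(2β y₂) + cosh(2β y₂))] / [α² + β² + α² cosh(2β y₂) − β² cos(2α y₁)], where y₁ = x + δt + x₁ and y₂ = x + γt + x₂. -/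
open Real Filter MeasureTheory
open Topology

/-- The squared breather in rational normal form. -/
noncomputable def Gaux (α β A B A' B' s : ℝ) : ℝ :=
  8*α^2*β^2*(α*Real.cos (α*(s+A+B))*Real.cosh (β*(s+A'+B')) -
      β*Real.sin (α*(s+A+B))*Real.sinh (β*(s+A'+B')))^2 /
    (α^2*Real.cosh (β*(s+A'+B'))^2 + β^2*Real.sin (α*(s+A+B))^2)^2

/-- The antiderivative of the squared breather. -/
noncomputable def Faux (α β A B A' B' s : ℝ) : ℝ :=
  4*β*(α^2*Real.cosh (β*(s+A'+B'))*(Real.cosh (β*(s+A'+B')) + Real.sinh (β*(s+A'+B'))) +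
      β^2*Real.sin (α*(s+A+B))^2 + α*β*(Real.sin (α*(s+A+B))*Real.cos (α*(s+A+B)))) /
    (α^2*Real.cosh (β*(s+A'+B'))^2 + β^2*Real.sin (α*(s+A+B))^2)

lemma Qaux_pos {α : ℝ} (β A B A' B' : ℝ) (hα : 0 < α) (s : ℝ) :
    0 < α^2*Real.cosh (β*(s+A'+B'))^2 + β^2*Real.sin (α*(s+A+B))^2 := by
  have h1 : 0 < α^2 * Real.cosh (β*(s+A'+B'))^2 :=
    mul_pos (pow_pos hα 2) (pow_pos (Real.cosh_pos _) 2)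
  have h2 : 0 ≤ β^2 * Real.sin (α*(s+A+B))^2 := by positivity

  linarith

lemma breather_sq (α β x₁ x₂ t : ℝ) (hα : 0 < α) (s : ℝ) :
    breather α β x₁ x₂ s t ^ 2 = Gaux α β ((α^2-3*β^2)*t) x₁ ((3*α^2-β^2)*t) x₂ s := by
  have hC := Real.cosh_pos (β * (s + (3*α^2 - β^2)*t + x₂))
  have hQ := Qaux_pos β ((α^2-3*β^2)*t) x₁ ((3*α^2-β^2)*t) x₂ hα s
  have hden : (0:ℝ) < 1 + (β/α)^2 * (Real.sin (α * (s + (α^2 - 3*β^2)*t + x₁)))^2 *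
      (1 / Real.cosh (β * (s + (3*α^2 - β^2)*t + x₂)))^2 := by positivity
  have hs2 : Real.sqrt 2 ^ 2 = 2 := Real.sq_sqrt (by norm_num)
  rw [breather, Gaux, Real.tanh_eq_sinh_div_cosh]
  rw [show (2 * Real.sqrt 2 * β * (1 / Real.cosh (β * (s + (3*α^2 - β^2)*t + x₂))) *
      ((Real.cos (α * (s + (α^2 - 3*β^2)*t + x₁)) -
        (β/α) * Real.sin (α * (s + (α^2 - 3*β^2)*t + x₁)) *
          (Real.sinh (β * (s + (3*α^2 - β^2)*t + x₂)) /
            Real.cosh (β * (s + (3*α^2 - β^2)*t + x₂)))) /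
        (1 + (β/α)^2 * (Real.sin (α * (s + (α^2 - 3*β^2)*t + x₁)))^2 *
          (1 / Real.cosh (β * (s + (3*α^2 - β^2)*t + x₂)))^2)))^2 =
      Real.sqrt 2 ^2 * (2 * β * (1 / Real.cosh (β * (s + (3*α^2 - β^2)*t + x₂))) *
      ((Real.cos (α * (s + (α^2 - 3*β^2)*t + x₁)) -
        (β/α) * Real.sin (α * (s + (α^2 - 3*β^2)*t + x₁)) *
          (Real.sinh (β * (s + (3*α^2 - β^2)*t + x₂)) /
            Real.cosh (β * (s + (3*α^2 - β^2)*t + x₂)))) /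
        (1 + (β/α)^2 * (Real.sin (α * (s + (α^2 - 3*β^2)*t + x₁)))^2 *
          (1 / Real.cosh (β * (s + (3*α^2 - β^2)*t + x₂)))^2)))^2 from by ring, hs2]
  field_simp
  ring

lemma hasDerivAt_Faux (α β A B A' B' : ℝ) (hα : 0 < α) (s : ℝ) :
    HasDerivAt (Faux α β A B A' B') (Gaux α β A B A' B' s) s := by
  have hQ := Qaux_pos β A B A' B' hα s
  have hu : HasDerivAt (fun s : ℝ => α*(s+A+B)) α s := by
    simpa using (((hasDerivAt_id s).add_const A).add_const B).const_mul α
  have hv : HasDerivAt (fun s : ℝ => β*(s+A'+B')) β s := by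
    simpa using (((hasDerivAt_id s).add_const A').add_const B').const_mul β
  have hsin := hu.sin
  have hcos := hu.cos
  have hcosh := hv.cosh
  have hsinh := hv.sinh
  have hP := (((hcosh.const_mul (α^2)).mul (hcosh.add hsinh)).add
      ((hsin.pow 2).const_mul (β^2))).add ((hsin.mul hcos).const_mul (α*β))
  have hQd := ((hcosh.pow 2).const_mul (α^2)).add ((hsin.pow 2).const_mul (β^2))
  have hF := (hP.const_mul (4*β)).div hQd hQ.ne'
  have hfun : Faux α β A B A' B' = fun s : ℝ =>
      4*β*(α^2*Real.cosh (β*(s+A'+B'))*(Real.cosh (β*(s+A'+B')) + Real.sinh (β*(s+A'+B'))) +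
        β^2*Real.sin (α*(s+A+B))^2 + α*β*(Real.sin (α*(s+A+B))*Real.cos (α*(s+A+B)))) /
      (α^2*Real.cosh (β*(s+A'+B'))^2 + β^2*Real.sin (α*(s+A+B))^2) := rfl
  rw [hfun]
  refine hF.congr_deriv ?_
  symm
  simp only [Pi.add_apply, Pi.mul_apply, Pi.pow_apply]
  rw [Gaux]
  rw [div_eq_div_iff (by positivity) (by positivity)]
  have h1 := Real.sin_sq_add_cos_sq (α*(s+A+B))
  have h2 := Real.cosh_sq_sub_sinh_sq (β*(s+A'+B'))
  linear_combination
    (4*α^2*β^2*(α^2*Real.cosh (β*(s+A'+B'))^2 + β^2*Real.sin (α*(s+A+B))^2)^3) * h1 -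
    (4*α^2*β^2*(α^2*Real.cosh (β*(s+A'+B'))^2 + β^2*Real.sin (α*(s+A+B))^2)^3) * h2

lemma tendsto_Faux (α β A B A' B' : ℝ) (hα : 0 < α) (hβ : 0 < β) :
    Tendsto (Faux α β A B A' B') atBot (𝓝 0) := by
  have hQtop : Tendsto (fun s => α^2*Real.cosh (β*(s+A'+B'))^2 + β^2*Real.sin (α*(s+A+B))^2)
      atBot atTop := by
    apply tendsto_atTop_mono (f := fun s => α^2/2 * Real.exp (-(β*(s+A'+B'))))
    · intro s
      have hc := Real.cosh_eq (β*(s+A'+B'))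
      have he1 := Real.exp_pos (β*(s+A'+B'))
      have he2 := Real.exp_pos (-(β*(s+A'+B')))
      have hs2 : (0:ℝ) ≤ β^2*Real.sin (α*(s+A+B))^2 := by positivity
      have hee : Real.exp (β*(s+A'+B')) * Real.exp (-(β*(s+A'+B'))) = 1 := by
        rw [← Real.exp_add]; simp
      have hkey : Real.exp (-(β*(s+A'+B'))) ≤ 2 * Real.cosh (β*(s+A'+B'))^2 := by
        rw [hc]
        nlinarith [hee, sq_nonneg (Real.exp (-(β*(s+A'+B'))) - 1), sq_nonneg (Real.exp (β*(s+A'+B')))]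
      nlinarith [pow_pos hα 2, mul_le_mul_of_nonneg_left hkey (le_of_lt (pow_pos hα 2))]
    · apply Tendsto.const_mul_atTop (by positivity : (0:ℝ) < α^2/2)
      apply Real.tendsto_exp_atTop.comp
      have h1 : Tendsto (fun s : ℝ => β*(s+A'+B')) atBot atBot := by
        apply Tendsto.const_mul_atBot hβ
        exact tendsto_atBot_add_const_right _ B' (tendsto_atBot_add_const_right _ A' tendsto_id)
      exact tendsto_neg_atBot_atTop.comp h1
  have hb : ∀ᶠ s in atBot, ‖Faux α β A B A' B' s‖ ≤ (4*β*(α^2+β^2+α*β)) *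
      (α^2*Real.cosh (β*(s+A'+B'))^2 + β^2*Real.sin (α*(s+A+B))^2)⁻¹ := by
    filter_upwards [eventually_le_atBot (-(A'+B'))] with s hs
    have hv : β*(s+A'+B') ≤ 0 := by
      apply mul_nonpos_of_nonneg_of_nonpos hβ.le
      linarith
    have hQ := Qaux_pos β A B A' B' hα s
    have hCS : Real.cosh (β*(s+A'+B')) * (Real.cosh (β*(s+A'+B')) + Real.sinh (β*(s+A'+B'))) =
        (Real.exp (β*(s+A'+B'))^2 + 1)/2 := by
      rw [Real.cosh_add_sinh, Real.cosh_eq]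
      have hee : Real.exp (β*(s+A'+B')) * Real.exp (-(β*(s+A'+B'))) = 1 := by
        rw [← Real.exp_add]; simp
      nlinarith [hee]
    have hexple : Real.exp (β*(s+A'+B'))^2 ≤ 1 := by
      have h1 : Real.exp (β*(s+A'+B')) ≤ 1 := Real.exp_le_one_iff.mpr hv
      nlinarith [Real.exp_pos (β*(s+A'+B'))]
    have hexppos := Real.exp_pos (β*(s+A'+B'))
    have h1 := Real.sin_sq_add_cos_sq (α*(s+A+B))
    have h2 := Real.sin_le_one (α*(s+A+B))
    have h3 := Real.neg_one_le_sin (α*(s+A+B))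
    have h4 := Real.cos_le_one (α*(s+A+B))
    have h5 := Real.neg_one_le_cos (α*(s+A+B))
    rw [Faux, Real.norm_eq_abs, abs_div, abs_of_pos hQ, ← div_eq_mul_inv]
    gcongr
    rw [abs_mul, abs_of_pos (by positivity : (0:ℝ) < 4*β)]
    rw [show (4*β*(α^2+β^2+α*β) : ℝ) = 4*β*(α^2+β^2+α*β) from rfl]
    have hPabs : |α^2*Real.cosh (β*(s+A'+B'))*(Real.cosh (β*(s+A'+B')) + Real.sinh (β*(s+A'+B'))) +
        β^2*Real.sin (α*(s+A+B))^2 + α*β*(Real.sin (α*(s+A+B))*Real.cos (α*(s+A+B)))| ≤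
        α^2+β^2+α*β := by
      rw [abs_le]
      constructor
      · nlinarith [sq_nonneg (Real.sin (α*(s+A+B)) + Real.cos (α*(s+A+B))),
          mul_pos hα hβ, pow_pos hα 2, sq_nonneg (Real.sin (α*(s+A+B)))]
      · nlinarith [sq_nonneg (Real.sin (α*(s+A+B)) - Real.cos (α*(s+A+B))),
          mul_pos hα hβ, pow_pos hα 2, sq_nonneg (Real.sin (α*(s+A+B)))]
    exact mul_le_mul_of_nonneg_left hPabs (by positivity)
  have htend := (hQtop.inv_tendsto_atTop).const_mul (4*β*(α^2+β^2+α*β))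
  rw [mul_zero] at htend
  exact squeeze_zero_norm' hb htend

lemma integrableOn_exp_affine (b k x : ℝ) (hb : 0 < b) :
    IntegrableOn (fun s => Real.exp (b*s + k)) (Set.Iic x) := by
  refine integrableOn_Iic_of_intervalIntegral_norm_bounded (Real.exp (b*x+k)/b) x
    (fun y => ((Real.continuous_exp.comp (by continuity)).intervalIntegrable y x).1) tendsto_id ?_
  filter_upwards with y
  have h1 : ∀ z : ℝ, ‖Real.exp (b*z+k)‖ = Real.exp (b*z+k) := fun z => by
    rw [Real.norm_eq_abs, Real.abs_exp]
  simp only [h1]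
  rw [intervalIntegral.integral_comp_mul_add Real.exp hb.ne' k, integral_exp, smul_eq_mul]
  rw [div_eq_inv_mul]
  apply mul_le_mul_of_nonneg_left _ (by positivity)
  have := Real.exp_pos (b*y+k)
  linarith

set_option maxHeartbeats 1000000 in
lemma Gaux_integrableOn (α β A B A' B' x : ℝ) (hα : 0 < α) (hβ : 0 < β) :
    IntegrableOn (fun s => Gaux α β A B A' B' s) (Set.Iic x) := by
  have hcont : Continuous (fun s => Gaux α β A B A' B' s) := by
    apply Continuous.div
    · continuity
    · continuity
    · intro s
      exact (pow_ne_zero 2 (Qaux_pos β A B A' B' hα s).ne')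
  apply Integrable.mono' (g := fun s => (64*β^2*(α^2+β^2)/α^2) * Real.exp (2*β*s + 2*β*(A'+B')))
  · exact (integrableOn_exp_affine (2*β) (2*β*(A'+B')) x (by positivity)).const_mul _
  · exact hcont.aestronglyMeasurable
  · apply Filter.Eventually.of_forall
    intro s
    have hQ := Qaux_pos β A B A' B' hα s
    have hC := Real.cosh_pos (β*(s+A'+B'))
    have hS2 : Real.sinh (β*(s+A'+B'))^2 ≤ Real.cosh (β*(s+A'+B'))^2 := by
      nlinarith [Real.cosh_sq_sub_sinh_sq (β*(s+A'+B'))]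
    have hs1 : Real.sin (α*(s+A+B))^2 ≤ 1 := Real.sin_sq_le_one _
    have hc1 : Real.cos (α*(s+A+B))^2 ≤ 1 := Real.cos_sq_le_one _
    have hEe : Real.exp (2*β*s + 2*β*(A'+B')) = Real.exp (β*(s+A'+B'))^2 := by
      rw [sq, ← Real.exp_add]; congr 1; ring
    have hee : Real.exp (β*(s+A'+B')) * Real.exp (-(β*(s+A'+B'))) = 1 := by
      rw [← Real.exp_add]; simp
    have hinvC : 1/Real.cosh (β*(s+A'+B'))^2 ≤ 4*Real.exp (β*(s+A'+B'))^2 := by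
      rw [div_le_iff₀ (by positivity)]
      rw [Real.cosh_eq]
      nlinarith [hee, sq_nonneg (Real.exp (β*(s+A'+B'))), sq_nonneg (Real.exp (-(β*(s+A'+B')))),
        mul_pos (Real.exp_pos (β*(s+A'+B'))) (Real.exp_pos (-(β*(s+A'+B'))))]
    have hGnn : 0 ≤ Gaux α β A B A' B' s := by rw [Gaux]; positivity
    rw [Real.norm_eq_abs, abs_of_nonneg hGnn, Gaux, hEe]
    set c := Real.cos (α*(s+A+B)) with hc
    set si := Real.sin (α*(s+A+B)) with hsi
    set C := Real.cosh (β*(s+A'+B')) with hCd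
    set S := Real.sinh (β*(s+A'+B')) with hSd
    set E := Real.exp (β*(s+A'+B')) with hEd
    have hE0 : 0 < E := Real.exp_pos _
    have hnum : 8*α^2*β^2*(α*c*C - β*si*S)^2 ≤ 16*α^2*β^2*(α^2+β^2)*C^2 := by
      have e1 : (α*c*C - β*si*S)^2 ≤ 2*(α*c*C)^2 + 2*(β*si*S)^2 := by
        nlinarith [sq_nonneg (α*c*C + β*si*S)]
      have e2 : (α*c*C)^2 ≤ α^2*C^2 := by
        nlinarith [mul_le_mul_of_nonneg_left hc1 (by positivity : (0:ℝ) ≤ α^2*C^2)]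
      have e3 : (β*si*S)^2 ≤ β^2*C^2 := by
        have e4 : (β*si*S)^2 ≤ β^2*S^2 := by
          nlinarith [mul_le_mul_of_nonneg_left hs1 (by positivity : (0:ℝ) ≤ β^2*S^2)]
        nlinarith [mul_le_mul_of_nonneg_left hS2 (by positivity : (0:ℝ) ≤ β^2)]
      nlinarith [sq_nonneg α, sq_nonneg β, sq_nonneg (α*β)]
    calc 8*α^2*β^2*(α*c*C - β*si*S)^2 / (α^2*C^2 + β^2*si^2)^2
        ≤ (16*α^2*β^2*(α^2+β^2)*C^2) / (α^2*C^2)^2 := by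
          apply div_le_div₀ (by positivity) hnum (by positivity)
          gcongr
          nlinarith [sq_nonneg si]
      _ = (16*β^2*(α^2+β^2)/α^2) * (1/C^2) := by
          field_simp
      _ ≤ (16*β^2*(α^2+β^2)/α^2) * (4*E^2) := by
          apply mul_le_mul_of_nonneg_left hinvC (by positivity)
      _ = 64*β^2*(α^2+β^2)/α^2 * E^2 := by ring

theorem breather_half_mass_closed_form (α β x₁ x₂ : ℝ) (hα : 0 < α) (hβ : 0 < β)
    (x t y₁ y₂ : ℝ) (hy₁ : y₁ = x + (α^2 - 3*β^2)*t + x₁)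
    (hy₂ : y₂ = x + (3*α^2 - β^2)*t + x₂) :
    (1/2) * ∫ s in Set.Iic x, (breather α β x₁ x₂ s t) ^ 2 =
      2 * β * (α^2 + β^2 + α*β*Real.sin (2*α*y₁) - β^2*Real.cos (2*α*y₁) +
          α^2*(Real.sinh (2*β*y₂) + Real.cosh (2*β*y₂))) /
        (α^2 + β^2 + α^2*Real.cosh (2*β*y₂) - β^2*Real.cos (2*α*y₁)) := by
  subst hy₁ hy₂
  have key : ∫ s in Set.Iic x, Gaux α β ((α^2-3*β^2)*t) x₁ ((3*α^2-β^2)*t) x₂ s =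
      Faux α β ((α^2-3*β^2)*t) x₁ ((3*α^2-β^2)*t) x₂ x - 0 :=
    integral_Iic_of_hasDerivAt_of_tendsto'
      (fun s _ => hasDerivAt_Faux α β ((α^2-3*β^2)*t) x₁ ((3*α^2-β^2)*t) x₂ hα s)
      (Gaux_integrableOn α β ((α^2-3*β^2)*t) x₁ ((3*α^2-β^2)*t) x₂ x hα hβ)
      (tendsto_Faux α β ((α^2-3*β^2)*t) x₁ ((3*α^2-β^2)*t) x₂ hα hβ)
  simp only [breather_sq α β x₁ x₂ t hα]
  rw [key, sub_zero]
  have h1 := Real.sin_sq_add_cos_sq (α*(x + (α^2-3*β^2)*t + x₁))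
  have h2 := Real.cosh_sq_sub_sinh_sq (β*(x + (3*α^2-β^2)*t + x₂))
  have hQ := Qaux_pos β ((α^2-3*β^2)*t) x₁ ((3*α^2-β^2)*t) x₂ hα x
  rw [show 2*α*(x + (α^2-3*β^2)*t + x₁) = 2*(α*(x + (α^2-3*β^2)*t + x₁)) from by ring,
      show 2*β*(x + (3*α^2-β^2)*t + x₂) = 2*(β*(x + (3*α^2-β^2)*t + x₂)) from by ring]
  rw [Real.sin_two_mul, Real.cos_two_mul, Real.sinh_two_mul, Real.cosh_two_mul]
  rw [Faux]
  set a := α * (x + (α^2-3*β^2)*t + x₁) with ha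
  set b := β * (x + (3*α^2-β^2)*t + x₂) with hb
  have hN : α^2 + β^2 + α*β*(2*Real.sin a*Real.cos a) - β^2*(2*Real.cos a^2 - 1) +
      α^2*(2*Real.sinh b*Real.cosh b + (Real.cosh b^2 + Real.sinh b^2)) =
      2*(α^2*Real.cosh b*(Real.cosh b + Real.sinh b) + β^2*Real.sin a^2 +
        α*β*(Real.sin a*Real.cos a)) := by
    linear_combination (-2*β^2)*h1 + (-α^2)*h2
  have hDQ : α^2 + β^2 + α^2*(Real.cosh b^2 + Real.sinh b^2) - β^2*(2*Real.cos a^2 - 1) =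
      2*(α^2*Real.cosh b^2 + β^2*Real.sin a^2) := by
    linear_combination (-2*β^2)*h1 + (-α^2)*h2
  rw [hN, hDQ]
  have hQ' : α^2*Real.cosh b^2 + β^2*Real.sin a^2 ≠ 0 := hQ.ne'
  field_simp
  ring
end

section
/- There exists a constant C > 0 such that for every twice continuously differentiable u : (−∞,0] → ℝ with u(0) = 0 and u'(0) = 0, with u, u', u'' square-integrable on (−∞,0] and u(x), u'(x) → 0 as x → −∞, one has (1/4) ∫_{−∞}^0 (u'')² ≤ F[u] + C (∫_{−∞}^0 u²)⁵, where F[u] = ∫_{−∞}^0 ((1/2)(u'')² − (5/2)u²(u')² + (1/4)u⁶). -/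
open Real Filter MeasureTheory

lemma cs_Iic {f g : ℝ → ℝ} (hf : Continuous f) (hg : Continuous g)
    (hf2 : IntegrableOn (fun x => f x ^ 2) (Set.Iic 0))
    (hg2 : IntegrableOn (fun x => g x ^ 2) (Set.Iic 0)) :
    ∫ x in Set.Iic (0:ℝ), |f x * g x| ≤
      Real.sqrt (∫ x in Set.Iic (0:ℝ), f x ^ 2) *
        Real.sqrt (∫ x in Set.Iic (0:ℝ), g x ^ 2) := by
  set μ := volume.restrict (Set.Iic (0:ℝ))
  have hpq : Real.HolderConjugate 2 2 := ⟨by norm_num, by norm_num, by norm_num⟩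
  have hfm : MemLp (fun x => |f x|) (ENNReal.ofReal 2) μ := by
    rw [show (ENNReal.ofReal 2) = 2 by norm_num]
    exact ((memLp_two_iff_integrable_sq hf.aestronglyMeasurable.restrict).mpr hf2).abs
  have hgm : MemLp (fun x => |g x|) (ENNReal.ofReal 2) μ := by
    rw [show (ENNReal.ofReal 2) = 2 by norm_num]
    exact ((memLp_two_iff_integrable_sq hg.aestronglyMeasurable.restrict).mpr hg2).abs
  have h := integral_mul_le_Lp_mul_Lq_of_nonneg hpq
    (Filter.Eventually.of_forall fun x => abs_nonneg (f x))
    (Filter.Eventually.of_forall fun x => abs_nonneg (g x)) hfm hgm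
  have e1 : ∀ (h : ℝ → ℝ), (∫ a, |h a| ^ (2:ℝ) ∂μ) = ∫ a, h a ^ 2 ∂μ := by
    intro h
    refine integral_congr_ae (Filter.Eventually.of_forall fun x => ?_)
    simp only [Real.rpow_two, sq_abs]
  rw [e1 f, e1 g, ← Real.sqrt_eq_rpow, ← Real.sqrt_eq_rpow] at h
  calc ∫ x in Set.Iic (0:ℝ), |f x * g x| = ∫ a, |f a| * |g a| ∂μ := by
        simp [μ, abs_mul]
    _ ≤ _ := h

lemma int_mul_Iic {f g : ℝ → ℝ} (hf : Continuous f) (hg : Continuous g)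
    (hf2 : IntegrableOn (fun x => f x ^ 2) (Set.Iic 0))
    (hg2 : IntegrableOn (fun x => g x ^ 2) (Set.Iic 0)) :
    IntegrableOn (fun x => f x * g x) (Set.Iic 0) := by
  apply Integrable.mono' (hf2.add hg2) ((hf.mul hg).aestronglyMeasurable.restrict)
  refine Filter.Eventually.of_forall fun x => ?_
  rw [Real.norm_eq_abs, Pi.mul_apply, abs_mul]
  simp only [Pi.add_apply]
  nlinarith [sq_nonneg (|f x| - |g x|), abs_nonneg (f x), abs_nonneg (g x),
    sq_abs (f x), sq_abs (g x)]

lemma young_aux (r s : ℝ) (_hr : 0 ≤ r) (_hs : 0 ≤ s) :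
    5 * r * s ^ 3 ≤ (1/4) * s ^ 4 + (16875/4) * r ^ 4 := by
  nlinarith [mul_nonneg (sq_nonneg (s - 15*r)) (sq_nonneg (s + 5*r)),
    mul_nonneg (sq_nonneg (s - 15*r)) (sq_nonneg r)]

set_option maxHeartbeats 2000000 in
theorem apriori_second_derivative_bound :
    ∃ C > (0:ℝ), ∀ u : ℝ → ℝ,
      ContDiff ℝ 2 u →
      u 0 = 0 → deriv u 0 = 0 →
      IntegrableOn (fun x => (u x) ^ 2) (Set.Iic 0) →
      IntegrableOn (fun x => (deriv u x) ^ 2) (Set.Iic 0) →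
      IntegrableOn (fun x => (iteratedDeriv 2 u x) ^ 2) (Set.Iic 0) →
      Tendsto u atBot (nhds 0) →
      Tendsto (deriv u) atBot (nhds 0) →
      (1/4) * (∫ x in Set.Iic (0:ℝ), (iteratedDeriv 2 u x) ^ 2) ≤
        (∫ x in Set.Iic (0:ℝ),
          ((1/2) * (iteratedDeriv 2 u x) ^ 2 - (5/2) * (u x) ^ 2 * (deriv u x) ^ 2 +
            (1/4) * (u x) ^ 6)) +
        C * (∫ x in Set.Iic (0:ℝ), (u x) ^ 2) ^ 5 := by
  refine ⟨16875/4, by norm_num, fun u hu hu0 hu'0 hA hB hD2 hub hu'b => ?_⟩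
  have h2 : iteratedDeriv 2 u = deriv (deriv u) := by
    rw [show (2:ℕ) = 1+1 from rfl, iteratedDeriv_succ, iteratedDeriv_one]
  rw [h2] at hD2 ⊢
  have du : Differentiable ℝ u := hu.differentiable (by norm_num)
  have hcd1 : ContDiff ℝ 1 (deriv u) := (contDiff_succ_iff_deriv.mp hu).2.2
  have du' : Differentiable ℝ (deriv u) := hcd1.differentiable one_ne_zero
  have cu : Continuous u := hu.continuous
  have cu' : Continuous (deriv u) := du'.continuous
  have cu'' : Continuous (deriv (deriv u)) := hcd1.continuous_deriv le_rfl
  set A := ∫ x in Set.Iic (0:ℝ), (u x) ^ 2 with hAdef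
  set B := ∫ x in Set.Iic (0:ℝ), (deriv u x) ^ 2 with hBdef
  set D := ∫ x in Set.Iic (0:ℝ), (deriv (deriv u) x) ^ 2 with hDdef
  have hA0 : 0 ≤ A := setIntegral_nonneg measurableSet_Iic fun x _ => sq_nonneg _
  have hB0 : 0 ≤ B := setIntegral_nonneg measurableSet_Iic fun x _ => sq_nonneg _
  have hD0 : 0 ≤ D := setIntegral_nonneg measurableSet_Iic fun x _ => sq_nonneg _
  have huu' : IntegrableOn (fun x => u x * deriv u x) (Set.Iic 0) := int_mul_Iic cu cu' hA hB
  have huu'' : IntegrableOn (fun x => u x * deriv (deriv u) x) (Set.Iic 0) :=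
    int_mul_Iic cu cu'' hA hD2
  have hB2 : IntegrableOn (fun x => deriv u x * deriv u x) (Set.Iic 0) := by
    simpa [pow_two] using hB
  -- integration by parts : B = - ∫ u u''
  have key1 : ∫ x in Set.Iic (0:ℝ),
      (deriv u x * deriv u x + u x * deriv (deriv u) x) = 0 := by
    have hder : ∀ x ∈ Set.Iic (0:ℝ), HasDerivAt (fun y => u y * deriv u y)
        (deriv u x * deriv u x + u x * deriv (deriv u) x) x :=
      fun x _ => (du x).hasDerivAt.mul (du' x).hasDerivAt
    have htd : Tendsto (fun y => u y * deriv u y) atBot (nhds 0) := by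
      simpa using hub.mul hu'b
    have := integral_Iic_of_hasDerivAt_of_tendsto' hder (hB2.add huu'') htd
    simpa [hu0, hu'0] using this
  have hBparts : B = - ∫ x in Set.Iic (0:ℝ), u x * deriv (deriv u) x := by
    have h0 : (∫ x in Set.Iic (0:ℝ), deriv u x * deriv u x) +
        ∫ x in Set.Iic (0:ℝ), u x * deriv (deriv u) x = 0 := by
      rw [← integral_add hB2 huu'']; exact key1
    have hBsq : B = ∫ x in Set.Iic (0:ℝ), deriv u x * deriv u x := by
      simp [hBdef, pow_two]
    rw [hBsq]; linarith
  have hBle : B ≤ Real.sqrt A * Real.sqrt D := by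
    rw [hBparts]
    calc -∫ x in Set.Iic (0:ℝ), u x * deriv (deriv u) x
        ≤ |∫ x in Set.Iic (0:ℝ), u x * deriv (deriv u) x| := neg_le_abs _
      _ ≤ ∫ x in Set.Iic (0:ℝ), |u x * deriv (deriv u) x| := by
          simpa only [Real.norm_eq_abs] using
            norm_integral_le_integral_norm (μ := volume.restrict (Set.Iic 0))
              (fun x => u x * deriv (deriv u) x)
      _ ≤ Real.sqrt A * Real.sqrt D := cs_Iic cu cu'' hA hD2
  -- sup bound
  set M := 2 * (Real.sqrt A * Real.sqrt B) with hMdef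
  have hM0 : 0 ≤ M := by positivity
  have hsup : ∀ x₀ ∈ Set.Iic (0:ℝ), u x₀ ^ 2 ≤ M := by
    intro x₀ hx₀
    have hder : ∀ x ∈ Set.Iic x₀, HasDerivAt (fun y => u y * u y)
        (2 * (u x * deriv u x)) x := by
      intro x _
      have h := (du x).hasDerivAt.mul (du x).hasDerivAt
      exact h.congr_deriv (by ring)
    have hint0 : IntegrableOn (fun x => 2 * (u x * deriv u x)) (Set.Iic 0) :=
      huu'.const_mul 2
    have hint : IntegrableOn (fun x => 2 * (u x * deriv u x)) (Set.Iic x₀) :=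
      hint0.mono_set (Set.Iic_subset_Iic.mpr hx₀)
    have htd : Tendsto (fun y => u y * u y) atBot (nhds 0) := by simpa using hub.mul hub
    have hftc := integral_Iic_of_hasDerivAt_of_tendsto' hder hint htd
    have h1 : u x₀ ^ 2 = ∫ x in Set.Iic x₀, 2 * (u x * deriv u x) := by
      rw [hftc]; ring
    have h2' : ∫ x in Set.Iic x₀, 2 * (u x * deriv u x)
        ≤ ∫ x in Set.Iic x₀, |2 * (u x * deriv u x)| :=
      setIntegral_mono_on hint hint.abs measurableSet_Iic fun x _ => le_abs_self _
    have h3 : ∫ x in Set.Iic x₀, |2 * (u x * deriv u x)|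
        ≤ ∫ x in Set.Iic (0:ℝ), |2 * (u x * deriv u x)| :=
      setIntegral_mono_set hint0.abs
        (Filter.Eventually.of_forall fun x => abs_nonneg _)
        ((Set.Iic_subset_Iic.mpr hx₀).eventuallyLE)
    have h4 : ∫ x in Set.Iic (0:ℝ), |2 * (u x * deriv u x)|
        = 2 * ∫ x in Set.Iic (0:ℝ), |u x * deriv u x| := by
      rw [← integral_const_mul]
      refine integral_congr_ae (Filter.Eventually.of_forall fun x => ?_)
      simp [abs_mul]
    have h5 := cs_Iic cu cu' hA hB
    rw [hMdef]
    linarith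
  -- E bound
  have hEint : IntegrableOn (fun x => u x ^ 2 * deriv u x ^ 2) (Set.Iic 0) := by
    apply Integrable.mono' (hB.const_mul M)
      (((cu.pow 2).mul (cu'.pow 2)).aestronglyMeasurable.restrict)
    filter_upwards [ae_restrict_mem measurableSet_Iic] with x hx
    simp only [Pi.mul_apply, Pi.pow_apply]
    rw [Real.norm_eq_abs, abs_of_nonneg (by positivity)]
    exact mul_le_mul_of_nonneg_right (hsup x hx) (sq_nonneg _)
  set E := ∫ x in Set.Iic (0:ℝ), u x ^ 2 * deriv u x ^ 2 with hEdef
  have hEle : E ≤ M * B := by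
    calc E ≤ ∫ x in Set.Iic (0:ℝ), M * deriv u x ^ 2 :=
        setIntegral_mono_on hEint (hB.const_mul M) measurableSet_Iic
          fun x hx => mul_le_mul_of_nonneg_right (hsup x hx) (sq_nonneg _)
      _ = M * B := by rw [integral_const_mul]
  -- u^6 integrable
  have hu6int : IntegrableOn (fun x => u x ^ 6) (Set.Iic 0) := by
    apply Integrable.mono' (hA.const_mul (M^2))
      ((cu.pow 6).aestronglyMeasurable.restrict)
    filter_upwards [ae_restrict_mem measurableSet_Iic] with x hx
    simp only [Pi.pow_apply]
    rw [Real.norm_eq_abs, abs_of_nonneg (by positivity)]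
    nlinarith [hsup x hx, sq_nonneg (u x), hM0,
      mul_le_mul_of_nonneg_right
        (mul_le_mul (hsup x hx) (hsup x hx) (sq_nonneg (u x)) hM0) (sq_nonneg (u x))]
  set G := ∫ x in Set.Iic (0:ℝ), u x ^ 6 with hGdef
  have hG0 : 0 ≤ G := setIntegral_nonneg measurableSet_Iic fun x _ => by positivity
  -- split the integral
  have hsplit : ∫ x in Set.Iic (0:ℝ),
      ((1/2) * (deriv (deriv u) x) ^ 2 - (5/2) * u x ^ 2 * deriv u x ^ 2 +
        (1/4) * u x ^ 6) = (1/2) * D - (5/2) * E + (1/4) * G := by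
    have i1 : IntegrableOn (fun x => (1/2) * (deriv (deriv u) x) ^ 2) (Set.Iic 0) :=
      hD2.const_mul _
    have i2 : IntegrableOn (fun x => (5/2) * u x ^ 2 * deriv u x ^ 2) (Set.Iic 0) := by
      have := hEint.const_mul (5/2)
      exact this.congr (Filter.Eventually.of_forall fun x => by simp only; ring)
    have i3 : IntegrableOn (fun x => (1/4) * u x ^ 6) (Set.Iic 0) := hu6int.const_mul _
    have i12 : IntegrableOn (fun x => (1/2) * (deriv (deriv u) x) ^ 2 -
        (5/2) * u x ^ 2 * deriv u x ^ 2) (Set.Iic 0) := i1.sub i2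
    rw [integral_add i12 i3, integral_sub i1 i2, integral_const_mul, integral_const_mul]
    have : ∫ x in Set.Iic (0:ℝ), (5/2) * u x ^ 2 * deriv u x ^ 2
        = (5/2) * E := by
      rw [hEdef, ← integral_const_mul]
      refine integral_congr_ae (Filter.Eventually.of_forall fun x => ?_)
      ring
    rw [this]
  rw [hsplit]
  clear_value A B D M E G
  -- final numeric chain
  set p := A ^ ((1:ℝ)/4) with hpdef
  set q := D ^ ((1:ℝ)/4) with hqdef
  have hp0 : 0 ≤ p := Real.rpow_nonneg hA0 _
  have hq0 : 0 ≤ q := Real.rpow_nonneg hD0 _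
  have hsA : Real.sqrt A = p ^ 2 := by
    rw [Real.sqrt_eq_rpow, hpdef, ← Real.rpow_natCast (A ^ ((1:ℝ)/4)) 2,
      ← Real.rpow_mul hA0]
    norm_num
  have hsD : Real.sqrt D = q ^ 2 := by
    rw [Real.sqrt_eq_rpow, hqdef, ← Real.rpow_natCast (D ^ ((1:ℝ)/4)) 2,
      ← Real.rpow_mul hD0]
    norm_num
  have hDq : D = q ^ 4 := by
    rw [hqdef, ← Real.rpow_natCast (D ^ ((1:ℝ)/4)) 4, ← Real.rpow_mul hD0]
    norm_num
  have hA5 : A ^ 5 = p ^ 20 := by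
    rw [hpdef, ← Real.rpow_natCast (A ^ ((1:ℝ)/4)) 20, ← Real.rpow_mul hA0,
      ← Real.rpow_natCast A 5]
    norm_num
  have hBpq : B ≤ p ^ 2 * q ^ 2 := by rw [← hsA, ← hsD]; exact hBle
  have hsB : Real.sqrt B ≤ p * q := by
    have h1 : B ≤ (p * q) ^ 2 := by rw [mul_pow]; exact hBpq
    calc Real.sqrt B ≤ Real.sqrt ((p*q)^2) := Real.sqrt_le_sqrt h1
      _ = p * q := Real.sqrt_sq (by positivity)
  have hMB : M * B ≤ 2 * p ^ 5 * q ^ 3 := by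
    have h1 : Real.sqrt B * B ≤ (p * q) * (p ^ 2 * q ^ 2) :=
      mul_le_mul hsB hBpq hB0 (by positivity)
    have h2 : M * B = 2 * p ^ 2 * (Real.sqrt B * B) := by
      rw [hMdef, hsA]; ring
    rw [h2]
    have h3 := mul_le_mul_of_nonneg_left h1 (by positivity : (0:ℝ) ≤ 2 * p ^ 2)
    nlinarith [h3]
  have hEf : (5/2) * E ≤ 5 * p ^ 5 * q ^ 3 := by linarith [hEle, hMB]
  have hy := young_aux (p ^ 5) q (by positivity) hq0
  have hy' : 5 * p ^ 5 * q ^ 3 ≤ (1/4) * q ^ 4 + (16875/4) * p ^ 20 := by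
    have hrr : (p ^ 5) ^ 4 = p ^ 20 := by ring
    linarith [hy, hrr.ge, hrr.le]
  rw [hA5]
  linarith [hEf, hy', hG0, hDq]
end

section
/- Let α, β > 0 with β < √3·α (so that γ = 3α² − β² > 0), and let L > 0. There exists a constant C > 0, depending only on α and β, such that for all t ≥ 0, all ρ₁ ∈ ℝ, all ρ₂ ∈ (−L/2, L/2), all j ∈ {1,2} and all k ∈ {0,1,2,3}: | ∂_{x_j} ∂_x^k B̃_{α,β}(x,t; x₁, x₂) evaluated at x = 0, x₁ = ρ₁, x₂ = ρ₂ + L | ≤ C e^{−βL/2}, where ∂_{x_1} and ∂_{x_2} denote derivatives with respect to the translation parameters. -/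
open Real Filter MeasureTheory

namespace BreatherAux

/-- Boundedness plus n levels of partial/diagonal derivative structure. -/
def Tame : ℕ → (ℝ → ℝ → ℝ) → Prop
  | 0, f => ∃ M, ∀ u v, |f u v| ≤ M
  | n+1, f => (∃ M, ∀ u v, |f u v| ≤ M) ∧
      ∃ fu fv, Tame n fu ∧ Tame n fv ∧
        (∀ u v, HasDerivAt (fun u' => f u' v) (fu u v) u) ∧
        (∀ u v, HasDerivAt (fun v' => f u v') (fv u v) v) ∧
        (∀ u v, HasDerivAt (fun x => f (u+x) (v+x)) (fu u v + fv u v) 0)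

lemma tame_bound {n : ℕ} {f : ℝ → ℝ → ℝ} (h : Tame n f) :
    ∃ M, 0 ≤ M ∧ ∀ u v, |f u v| ≤ M := by
  cases n with
  | zero => obtain ⟨M, hM⟩ := h; exact ⟨M, (abs_nonneg _).trans (hM 0 0), hM⟩
  | succ n => obtain ⟨⟨M, hM⟩, _⟩ := h; exact ⟨M, (abs_nonneg _).trans (hM 0 0), hM⟩

lemma tame_congr {n : ℕ} {f g : ℝ → ℝ → ℝ} (h : ∀ u v, f u v = g u v)
    (hf : Tame n f) : Tame n g := by
  have : f = g := funext fun u => funext fun v => h u v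
  rwa [← this]

lemma tame_down : ∀ {n : ℕ} {f : ℝ → ℝ → ℝ}, Tame (n+1) f → Tame n f := by
  intro n
  induction n with
  | zero => intro f h; exact h.1
  | succ n ih =>
    intro f h
    obtain ⟨hb, fu, fv, hfu, hfv, h1, h2, h3⟩ := h
    exact ⟨hb, fu, fv, ih hfu, ih hfv, h1, h2, h3⟩

lemma tame_const : ∀ (n : ℕ) (c : ℝ), Tame n (fun _ _ => c) := by
  intro n
  induction n with
  | zero => intro c; exact ⟨|c|, fun _ _ => le_refl _⟩
  | succ n ih =>
    intro c
    refine ⟨⟨|c|, fun _ _ => le_refl _⟩, (fun _ _ => 0), (fun _ _ => 0), ih 0, ih 0,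
      fun u v => hasDerivAt_const u c, fun u v => hasDerivAt_const v c, fun u v => ?_⟩
    simpa using hasDerivAt_const (0:ℝ) c

lemma tame_add : ∀ (n : ℕ) {f g : ℝ → ℝ → ℝ}, Tame n f → Tame n g →
    Tame n (fun u v => f u v + g u v) := by
  intro n
  induction n with
  | zero =>
    intro f g ⟨M, hM⟩ ⟨N, hN⟩
    exact ⟨M + N, fun u v => (abs_add_le _ _).trans (add_le_add (hM u v) (hN u v))⟩
  | succ n ih =>
    intro f g hf hg
    obtain ⟨⟨M, hM⟩, fu, fv, hfu, hfv, hf1, hf2, hf3⟩ := hf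
    obtain ⟨⟨N, hN⟩, gu, gv, hgu, hgv, hg1, hg2, hg3⟩ := hg
    refine ⟨⟨M + N, fun u v => (abs_add_le _ _).trans (add_le_add (hM u v) (hN u v))⟩,
      (fun u v => fu u v + gu u v), (fun u v => fv u v + gv u v),
      ih hfu hgu, ih hfv hgv,
      fun u v => (hf1 u v).add (hg1 u v), fun u v => (hf2 u v).add (hg2 u v),
      fun u v => ?_⟩
    have := (hf3 u v).add (hg3 u v)
    refine this.congr_deriv ?_
    ring

lemma tame_mul : ∀ (n : ℕ) {f g : ℝ → ℝ → ℝ}, Tame n f → Tame n g →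
    Tame n (fun u v => f u v * g u v) := by
  intro n
  induction n with
  | zero =>
    intro f g hf hg
    obtain ⟨M, hM0, hM⟩ := tame_bound hf
    obtain ⟨N, hN0, hN⟩ := tame_bound hg
    refine ⟨M * N, fun u v => ?_⟩
    rw [abs_mul]
    exact mul_le_mul (hM u v) (hN u v) (abs_nonneg _) hM0
  | succ n ih =>
    intro f g hf hg
    obtain ⟨M, hM0, hM⟩ := tame_bound hf
    obtain ⟨N, hN0, hN⟩ := tame_bound hg
    obtain ⟨_, fu, fv, hfu, hfv, hf1, hf2, hf3⟩ := hf
    obtain ⟨_, gu, gv, hgu, hgv, hg1, hg2, hg3⟩ := hg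
    have hfn : Tame n f := tame_down (by exact ⟨⟨M, hM⟩, fu, fv, hfu, hfv, hf1, hf2, hf3⟩)
    have hgn : Tame n g := tame_down (by exact ⟨⟨N, hN⟩, gu, gv, hgu, hgv, hg1, hg2, hg3⟩)
    refine ⟨⟨M * N, fun u v => by
        rw [abs_mul]; exact mul_le_mul (hM u v) (hN u v) (abs_nonneg _) hM0⟩,
      (fun u v => fu u v * g u v + f u v * gu u v),
      (fun u v => fv u v * g u v + f u v * gv u v),
      tame_add n (ih hfu hgn) (ih hfn hgu),
      tame_add n (ih hfv hgn) (ih hfn hgv),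
      fun u v => (hf1 u v).mul (hg1 u v), fun u v => (hf2 u v).mul (hg2 u v),
      fun u v => ?_⟩
    have := (hf3 u v).mul (hg3 u v)
    refine this.congr_deriv ?_
    ring

lemma tame_neg {n : ℕ} {f : ℝ → ℝ → ℝ} (hf : Tame n f) : Tame n (fun u v => -(f u v)) :=
  tame_congr (fun u v => by ring) (tame_mul n (tame_const n (-1)) hf)

lemma tame_sub {n : ℕ} {f g : ℝ → ℝ → ℝ} (hf : Tame n f) (hg : Tame n g) :
    Tame n (fun u v => f u v - g u v) :=
  tame_congr (fun u v => by ring) (tame_add n hf (tame_neg hg))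

lemma abs_sinh_le_cosh (x : ℝ) : |Real.sinh x| ≤ Real.cosh x := by
  have h1 := Real.cosh_sq_sub_sinh_sq x
  have h2 := Real.cosh_pos x
  rw [abs_le]
  constructor <;> nlinarith

lemma abs_tanh_le_one (x : ℝ) : |Real.tanh x| ≤ 1 := by
  rw [Real.tanh_eq_sinh_div_cosh, abs_div, abs_of_pos (Real.cosh_pos x),
    div_le_one (Real.cosh_pos x)]
  exact abs_sinh_le_cosh x

lemma abs_sech_le_one (x : ℝ) : |1 / Real.cosh x| ≤ 1 := by
  rw [abs_of_pos (by positivity : (0:ℝ) < 1 / Real.cosh x), div_le_one (Real.cosh_pos x)]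
  exact Real.one_le_cosh x

lemma tanh_deriv' {g : ℝ → ℝ} {g' x : ℝ} (hg : HasDerivAt g g' x) :
    HasDerivAt (fun y => Real.tanh (g y)) ((1/Real.cosh (g x)) * (1/Real.cosh (g x)) * g') x := by
  have hq := (hg.sinh).div hg.cosh (Real.cosh_pos _).ne'
  have hfn : ((fun y => Real.sinh (g y)) / fun y => Real.cosh (g y)) = fun y => Real.tanh (g y) := by
    funext y; rw [Pi.div_apply, Real.tanh_eq_sinh_div_cosh]
  rw [hfn] at hq
  refine hq.congr_deriv ?_
  have h1 := Real.cosh_sq_sub_sinh_sq (g x)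
  have h2 := (Real.cosh_pos (g x)).ne'
  field_simp
  linear_combination g' * h1

lemma sech_deriv' {g : ℝ → ℝ} {g' x : ℝ} (hg : HasDerivAt g g' x) :
    HasDerivAt (fun y => 1/Real.cosh (g y)) (-(Real.tanh (g x)) * (1/Real.cosh (g x)) * g') x := by
  have hq := (hg.cosh).inv (Real.cosh_pos _).ne'
  simp only [one_div]
  refine hq.congr_deriv ?_
  rw [Real.tanh_eq_sinh_div_cosh]
  have h2 := (Real.cosh_pos (g x)).ne'
  field_simp

lemma tame_hyp (β : ℝ) : ∀ n : ℕ,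
    Tame n (fun _ v => Real.tanh (β * v)) ∧ Tame n (fun _ v => 1 / Real.cosh (β * v)) := by
  intro n
  induction n with
  | zero =>
    exact ⟨⟨1, fun _ v => abs_tanh_le_one _⟩, ⟨1, fun _ v => abs_sech_le_one _⟩⟩
  | succ n ih =>
    obtain ⟨ihT, ihS⟩ := ih
    have hb : ∀ v : ℝ, HasDerivAt (fun v' : ℝ => β * v') (β * 1) v :=
      fun v => (hasDerivAt_id v).const_mul β
    have hd : ∀ v : ℝ, HasDerivAt (fun x : ℝ => β * (v + x)) (β * 1) 0 :=
      fun v => ((hasDerivAt_id 0).const_add v).const_mul β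
    constructor
    · refine ⟨⟨1, fun _ v => abs_tanh_le_one _⟩, (fun _ _ => 0),
        (fun _ v => (1 / Real.cosh (β * v)) * (1 / Real.cosh (β * v)) * β),
        tame_const n 0,
        tame_mul n (tame_mul n ihS ihS) (tame_const n β),
        fun u v => hasDerivAt_const u _,
        fun u v => by simpa using tanh_deriv' (hb v),
        fun u v => by simpa using tanh_deriv' (hd v)⟩
    · refine ⟨⟨1, fun _ v => abs_sech_le_one _⟩, (fun _ _ => 0),
        (fun _ v => -(Real.tanh (β * v)) * (1 / Real.cosh (β * v)) * β),
        tame_const n 0,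
        tame_mul n (tame_mul n (tame_neg ihT) ihS) (tame_const n β),
        fun u v => hasDerivAt_const u _,
        fun u v => by simpa using sech_deriv' (hb v),
        fun u v => by simpa using sech_deriv' (hd v)⟩

lemma tame_trig (α : ℝ) : ∀ n : ℕ,
    Tame n (fun u _ => Real.sin (α * u)) ∧ Tame n (fun u _ => Real.cos (α * u)) := by
  intro n
  induction n with
  | zero =>
    exact ⟨⟨1, fun u _ => Real.abs_sin_le_one _⟩, ⟨1, fun u _ => Real.abs_cos_le_one _⟩⟩
  | succ n ih =>
    obtain ⟨ihs, ihc⟩ := ih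
    have hder : ∀ u : ℝ, HasDerivAt (fun u' : ℝ => α * u') (α * 1) u :=
      fun u => (hasDerivAt_id u).const_mul α
    constructor
    · refine ⟨⟨1, fun u _ => Real.abs_sin_le_one _⟩,
        (fun u _ => Real.cos (α * u) * (α * 1)), (fun _ _ => 0),
        tame_mul n ihc (tame_const n (α * 1)), tame_const n 0,
        fun u v => (hder u).sin,
        fun u v => hasDerivAt_const v _,
        fun u v => ?_⟩
      have h2 : HasDerivAt (fun x : ℝ => α * (u + x)) (α * 1) 0 :=
        ((hasDerivAt_id 0).const_add u).const_mul α
      have h3 := h2.sin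
      convert h3 using 1
      simp
    · refine ⟨⟨1, fun u _ => Real.abs_cos_le_one _⟩,
        (fun u _ => -Real.sin (α * u) * (α * 1)), (fun _ _ => 0),
        tame_mul n (tame_neg ihs) (tame_const n (α * 1)), tame_const n 0,
        fun u v => (hder u).cos,
        fun u v => hasDerivAt_const v _,
        fun u v => ?_⟩
      have h2 : HasDerivAt (fun x : ℝ => α * (u + x)) (α * 1) 0 :=
        ((hasDerivAt_id 0).const_add u).const_mul α
      have h3 := h2.cos
      convert h3 using 1
      simp

lemma tame_inv : ∀ (n : ℕ) {f : ℝ → ℝ → ℝ}, Tame n f → (∀ u v, 1 ≤ f u v) →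
    Tame n (fun u v => 1 / f u v) := by
  intro n
  induction n with
  | zero =>
    intro f _ h1
    refine ⟨1, fun u v => ?_⟩
    have h := h1 u v
    rw [abs_of_pos (by positivity), div_le_one (by linarith)]
    linarith
  | succ n ih =>
    intro f hf h1
    obtain ⟨hb, fu, fv, hfu, hfv, hd1, hd2, hd3⟩ := hf
    have hfn : Tame n f := tame_down ⟨hb, fu, fv, hfu, hfv, hd1, hd2, hd3⟩
    have hinvn : Tame n (fun u v => 1 / f u v) := ih hfn h1
    have hne : ∀ u v, f u v ≠ 0 := fun u v => by have := h1 u v; positivity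
    refine ⟨⟨1, fun u v => by
        have h := h1 u v
        rw [abs_of_pos (by positivity), div_le_one (by linarith)]; linarith⟩,
      (fun u v => -(fu u v) * (1 / f u v) * (1 / f u v)),
      (fun u v => -(fv u v) * (1 / f u v) * (1 / f u v)),
      tame_mul n (tame_mul n (tame_neg hfu) hinvn) hinvn,
      tame_mul n (tame_mul n (tame_neg hfv) hinvn) hinvn,
      fun u v => ?_, fun u v => ?_, fun u v => ?_⟩
    · have h := (hd1 u v).inv (hne u v)
      simp only [one_div]
      refine h.congr_deriv ?_
      field_simp
    · have h := (hd2 u v).inv (hne u v)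
      simp only [one_div]
      refine h.congr_deriv ?_
      field_simp
    · have h := (hd3 u v).inv (hne (u+0) (v+0))
      simp only [one_div]
      refine h.congr_deriv ?_
      have h0 := hne u v
      simp only [add_zero]
      field_simp
      ring

noncomputable def Dfun (α β u v : ℝ) : ℝ :=
  1 + (β/α)^2 * Real.sin (α*u)^2 * (1/Real.cosh (β*v))^2

noncomputable def hfun (α β u v : ℝ) : ℝ :=
  2 * Real.sqrt 2 * β *
    ((Real.cos (α*u) - β/α * Real.sin (α*u) * Real.tanh (β*v)) * (1 / Dfun α β u v))

lemma one_le_Dfun (α β u v : ℝ) : 1 ≤ Dfun α β u v := by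
  have : 0 ≤ (β/α)^2 * Real.sin (α*u)^2 * (1/Real.cosh (β*v))^2 := by positivity
  simp only [Dfun]
  linarith

lemma tame_Dfun (α β : ℝ) (n : ℕ) : Tame n (Dfun α β) := by
  have h := tame_trig α n
  have h2 := tame_hyp β n
  refine tame_congr (fun u v => ?_) (tame_add n (tame_const n 1)
    (tame_mul n (tame_mul n (tame_mul n (tame_mul n (tame_const n ((β/α)^2))
      h.1) h.1) h2.2) h2.2))
  simp only [Dfun]
  ring

lemma tame_hfun (α β : ℝ) (n : ℕ) : Tame n (hfun α β) := by
  have h := tame_trig α n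
  have h2 := tame_hyp β n
  have hD := tame_inv n (tame_Dfun α β n) (one_le_Dfun α β)
  refine tame_congr (fun u v => ?_) (tame_mul n (tame_const n (2 * Real.sqrt 2 * β))
    (tame_mul n (tame_sub h.2 (tame_mul n (tame_mul n (tame_const n (β/α)) h.1) h2.1)) hD))
  simp only [hfun]

lemma breather_eq (α β x₁ x₂ x t : ℝ) :
    breather α β x₁ x₂ x t =
      (1 / Real.cosh (β * ((x₂ + (3*α^2 - β^2)*t) + x))) *
        hfun α β ((x₁ + (α^2 - 3*β^2)*t) + x) ((x₂ + (3*α^2 - β^2)*t) + x) := by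
  have e1 : β * (x + (3*α^2 - β^2)*t + x₂) = β * ((x₂ + (3*α^2 - β^2)*t) + x) := by ring
  have e2 : α * (x + (α^2 - 3*β^2)*t + x₁) = α * ((x₁ + (α^2 - 3*β^2)*t) + x) := by ring
  rw [breather, e1, e2, hfun, Dfun]
  ring

lemma hasDerivAt_diag_shift {f D : ℝ → ℝ → ℝ}
    (hd : ∀ u v, HasDerivAt (fun x => f (u+x) (v+x)) (D u v) 0) (u v x₀ : ℝ) :
    HasDerivAt (fun x => f (u+x) (v+x)) (D (u+x₀) (v+x₀)) x₀ := by
  have h := hd (u+x₀) (v+x₀)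
  have h2 : HasDerivAt (fun x : ℝ => x - x₀) 1 x₀ := (hasDerivAt_id x₀).sub_const x₀
  rw [show (0:ℝ) = x₀ - x₀ by ring] at h
  have h3 := HasDerivAt.comp (x := x₀) (h := fun x : ℝ => x - x₀) (hh := h2) (hh₂ := h)
  have hfn : (fun x => f (u+x) (v+x)) =
      ((fun y => f ((u+x₀)+y) ((v+x₀)+y)) ∘ (fun x => x - x₀)) := by
    funext x
    simp only [Function.comp_apply]
    rw [show (u+x₀)+(x-x₀) = u+x by ring, show (v+x₀)+(x-x₀) = v+x by ring]
  rw [hfn]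
  simpa using h3

lemma tame_iter (β : ℝ) : ∀ (k n : ℕ) (f : ℝ → ℝ → ℝ), Tame (n+k) f →
    ∃ g, Tame n g ∧ ∀ u v,
      iteratedDeriv k (fun x => (1/Real.cosh (β*(v+x))) * f (u+x) (v+x)) 0 =
        (1/Real.cosh (β*v)) * g u v := by
  intro k
  induction k with
  | zero =>
    intro n f hf
    refine ⟨f, by simpa using hf, fun u v => ?_⟩
    simp [iteratedDeriv_zero]
  | succ k ih =>
    intro n f hf
    rw [show n + (k+1) = (n+k)+1 by ring] at hf
    obtain ⟨hb, fu, fv, hTu, hTv, hu, hv, hd⟩ := hf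
    have hfnk : Tame (n+k) f := tame_down ⟨hb, fu, fv, hTu, hTv, hu, hv, hd⟩
    set f₁ : ℝ → ℝ → ℝ :=
      fun u v => fu u v + fv u v - β * Real.tanh (β*v) * f u v with hf₁
    have hT1 : Tame (n+k) f₁ :=
      tame_sub (tame_add _ hTu hTv)
        (tame_mul _ (tame_mul _ (tame_const _ β) ((tame_hyp β (n+k)).1)) hfnk)
    have key : ∀ u v x₀, HasDerivAt
        (fun x => (1/Real.cosh (β*(v+x))) * f (u+x) (v+x))
        ((1/Real.cosh (β*(v+x₀))) * f₁ (u+x₀) (v+x₀)) x₀ := by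
      intro u v x₀
      have hin : HasDerivAt (fun x : ℝ => β * (v + x)) (β * 1) x₀ :=
        ((hasDerivAt_id x₀).const_add v).const_mul β
      have hA := sech_deriv' hin
      have hB := hasDerivAt_diag_shift (f := f) (D := fun u v => fu u v + fv u v) hd u v x₀
      have hC := hA.mul hB
      refine hC.congr_deriv ?_
      simp only [hf₁]
      ring
    obtain ⟨g, hg, hgeq⟩ := ih n f₁ hT1
    refine ⟨g, hg, fun u v => ?_⟩
    rw [iteratedDeriv_succ']
    have hderiv : deriv (fun x => (1/Real.cosh (β*(v+x))) * f (u+x) (v+x)) =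
        fun x => (1/Real.cosh (β*(v+x))) * f₁ (u+x) (v+x) := by
      funext x₀; exact (key u v x₀).deriv
    rw [hderiv]
    exact hgeq u v

lemma sech_le_exp (x : ℝ) : 1/Real.cosh x ≤ 2 * Real.exp (-x) := by
  rw [Real.cosh_eq, div_le_iff₀ (by positivity)]
  have h : Real.exp (-x) * Real.exp x = 1 := by rw [← Real.exp_add]; simp
  nlinarith [Real.exp_pos (-x), Real.exp_pos x, sq_nonneg (Real.exp (-x))]

lemma deriv_bound_u {β : ℝ} {g gu : ℝ → ℝ → ℝ} {Mu : ℝ}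
    (hgu : ∀ u v, HasDerivAt (fun u' => g u' v) (gu u v) u)
    (hMu : ∀ u v, |gu u v| ≤ Mu) (c v₀ ρ : ℝ) :
    |deriv (fun a => (1/Real.cosh (β*v₀)) * g (a + c) v₀) ρ| ≤ (1/Real.cosh (β*v₀)) * Mu := by
  have h1 : HasDerivAt (fun a : ℝ => a + c) 1 ρ := (hasDerivAt_id ρ).add_const c
  have h2 := HasDerivAt.comp (x := ρ) (h := fun a : ℝ => a + c)
    (hh := h1) (hh₂ := hgu (ρ + c) v₀)
  have h3 : HasDerivAt (fun a => (1/Real.cosh (β*v₀)) * g (a + c) v₀)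
      ((1/Real.cosh (β*v₀)) * (gu (ρ + c) v₀ * 1)) ρ := by
    exact HasDerivAt.const_mul _ h2
  rw [h3.deriv, mul_one, abs_mul,
    abs_of_pos (show (0:ℝ) < 1/Real.cosh (β*v₀) by positivity)]
  exact mul_le_mul_of_nonneg_left (hMu _ _) (by positivity)

lemma deriv_bound_v {β : ℝ} (hβ : 0 ≤ β) {g gv : ℝ → ℝ → ℝ} {Mg Mv : ℝ}
    (hgv : ∀ u v, HasDerivAt (fun v' => g u v') (gv u v) v)
    (hMg : ∀ u v, |g u v| ≤ Mg) (hMv : ∀ u v, |gv u v| ≤ Mv) (U c a₀ : ℝ) :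
    |deriv (fun a => (1/Real.cosh (β*(a + c))) * g U (a + c)) a₀| ≤
      (1/Real.cosh (β*(a₀ + c))) * (β*Mg + Mv) := by
  have hin : HasDerivAt (fun a : ℝ => β * (a + c)) (β * 1) a₀ :=
    ((hasDerivAt_id a₀).add_const c).const_mul β
  have hA := sech_deriv' hin
  have h1 : HasDerivAt (fun a : ℝ => a + c) 1 a₀ := (hasDerivAt_id a₀).add_const c
  have hB : HasDerivAt (fun a => g U (a + c)) (gv U (a₀ + c) * 1) a₀ :=
    HasDerivAt.comp (x := a₀) (h := fun a : ℝ => a + c) (hh := h1) (hh₂ := hgv U (a₀ + c))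
  have hC := hA.mul hB
  rw [HasDerivAt.deriv (f := fun a => (1/Real.cosh (β*(a + c))) * g U (a + c)) hC]
  have hsech : (0:ℝ) < 1/Real.cosh (β*(a₀ + c)) := by positivity
  have ht1 := abs_tanh_le_one (β*(a₀ + c))
  have hg1 := hMg U (a₀ + c)
  have hv1 := hMv U (a₀ + c)
  have hgn := abs_nonneg (g U (a₀ + c))
  have hvn := abs_nonneg (gv U (a₀ + c))
  have htn := abs_nonneg (Real.tanh (β*(a₀ + c)))
  have e1 : |(-(Real.tanh (β*(a₀+c))) * (1/Real.cosh (β*(a₀+c))) * (β*1)) * g U (a₀+c)|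
      ≤ (1/Real.cosh (β*(a₀+c))) * (β * Mg) := by
    rw [abs_mul, abs_mul, abs_mul, abs_neg, abs_of_pos hsech, mul_one,
      abs_of_nonneg hβ]
    nlinarith [mul_le_mul ht1 hg1 hgn zero_le_one, mul_nonneg hsech.le hβ]
  have e2 : |(1/Real.cosh (β*(a₀+c))) * (gv U (a₀+c) * 1)|
      ≤ (1/Real.cosh (β*(a₀+c))) * Mv := by
    rw [mul_one, abs_mul, abs_of_pos hsech]
    exact mul_le_mul_of_nonneg_left hv1 hsech.le
  calc |(-(Real.tanh (β*(a₀+c))) * (1/Real.cosh (β*(a₀+c))) * (β*1)) * g U (a₀+c)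
        + (1/Real.cosh (β*(a₀+c))) * (gv U (a₀+c) * 1)|
      ≤ |(-(Real.tanh (β*(a₀+c))) * (1/Real.cosh (β*(a₀+c))) * (β*1)) * g U (a₀+c)|
        + |(1/Real.cosh (β*(a₀+c))) * (gv U (a₀+c) * 1)| := abs_add_le _ _
    _ ≤ (1/Real.cosh (β*(a₀+c))) * (β * Mg) + (1/Real.cosh (β*(a₀+c))) * Mv := by
        linarith
    _ = (1/Real.cosh (β*(a₀+c))) * (β*Mg + Mv) := by ring

lemma tame_one_elim {f : ℝ → ℝ → ℝ} (h : Tame 1 f) :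
    ∃ (M Mu Mv : ℝ) (fu fv : ℝ → ℝ → ℝ),
      0 ≤ M ∧ 0 ≤ Mu ∧ 0 ≤ Mv ∧
      (∀ u v, |f u v| ≤ M) ∧ (∀ u v, |fu u v| ≤ Mu) ∧ (∀ u v, |fv u v| ≤ Mv) ∧
      (∀ u v, HasDerivAt (fun u' => f u' v) (fu u v) u) ∧
      (∀ u v, HasDerivAt (fun v' => f u v') (fv u v) v) := by
  obtain ⟨hb, fu, fv, hTu, hTv, h1, h2, _⟩ := h
  obtain ⟨M, hM0, hM⟩ := tame_bound (n := 0) hb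
  obtain ⟨Mu, hMu0, hMu⟩ := tame_bound hTu
  obtain ⟨Mv, hMv0, hMv⟩ := tame_bound hTv
  exact ⟨M, Mu, Mv, fu, fv, hM0, hMu0, hMv0, hM, hMu, hMv, h1, h2⟩

end BreatherAux


set_option maxHeartbeats 2000000

theorem breather_boundary_values_small (α β : ℝ) (hα : 0 < α) (hβ : 0 < β)
    (hlv : β < Real.sqrt 3 * α) :
    ∃ C > (0:ℝ), ∀ L > (0:ℝ), ∀ t ≥ (0:ℝ), ∀ ρ₁ : ℝ, ∀ ρ₂ ∈ Set.Ioo (-(L/2)) (L/2),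
      ∀ k ≤ 3,
        |deriv (fun a => iteratedDeriv k (fun y => breather α β a (ρ₂ + L) y t) 0) ρ₁| ≤
          C * Real.exp (-β * L / 2) ∧
        |deriv (fun a => iteratedDeriv k (fun y => breather α β ρ₁ a y t) 0) (ρ₂ + L)| ≤
          C * Real.exp (-β * L / 2) := by
  have hγ : 0 < 3*α^2 - β^2 := by
    nlinarith [mul_self_lt_mul_self hβ.le hlv,
      Real.mul_self_sqrt (show (0:ℝ) ≤ 3 by norm_num)]
  obtain ⟨g0, hg0, he0⟩ :=
    BreatherAux.tame_iter β 0 1 (BreatherAux.hfun α β) (BreatherAux.tame_hfun α β (1+0))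
  obtain ⟨M0, Mu0, Mv0, gu0, gv0, hM0n, hMu0n, hMv0n, hM0, hMu0, hMv0, hu0, hv0⟩ :=
    BreatherAux.tame_one_elim hg0
  obtain ⟨g1, hg1, he1⟩ :=
    BreatherAux.tame_iter β 1 1 (BreatherAux.hfun α β) (BreatherAux.tame_hfun α β (1+1))
  obtain ⟨M1, Mu1, Mv1, gu1, gv1, hM1n, hMu1n, hMv1n, hM1, hMu1, hMv1, hu1, hv1⟩ :=
    BreatherAux.tame_one_elim hg1
  obtain ⟨g2, hg2, he2⟩ :=
    BreatherAux.tame_iter β 2 1 (BreatherAux.hfun α β) (BreatherAux.tame_hfun α β (1+2))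
  obtain ⟨M2, Mu2, Mv2, gu2, gv2, hM2n, hMu2n, hMv2n, hM2, hMu2, hMv2, hu2, hv2⟩ :=
    BreatherAux.tame_one_elim hg2
  obtain ⟨g3, hg3, he3⟩ :=
    BreatherAux.tame_iter β 3 1 (BreatherAux.hfun α β) (BreatherAux.tame_hfun α β (1+3))
  obtain ⟨M3, Mu3, Mv3, gu3, gv3, hM3n, hMu3n, hMv3n, hM3, hMu3, hMv3, hu3, hv3⟩ :=
    BreatherAux.tame_one_elim hg3
  set K : ℝ := M0+Mu0+Mv0+M1+Mu1+Mv1+M2+Mu2+Mv2+M3+Mu3+Mv3 with hKdef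
  have hK0 : 0 ≤ K := by simp only [hKdef]; linarith
  have hβK : 0 ≤ β*K := mul_nonneg hβ.le hK0
  set C : ℝ := 2*K + 2*(β*K) + 1 with hCdef
  have hC : 0 < C := by simp only [hCdef]; linarith
  refine ⟨C, hC, ?_⟩
  intro L hL t ht ρ₁ ρ₂ hρ k hk
  obtain ⟨hρ1, hρ2⟩ := hρ
  have hv₀ : L/2 ≤ ρ₂ + L + (3*α^2 - β^2)*t := by
    nlinarith [mul_nonneg hγ.le ht]
  have hsech : 1/Real.cosh (β*(ρ₂ + L + (3*α^2 - β^2)*t)) ≤ 2*Real.exp (-β * L / 2) := by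
    refine le_trans (BreatherAux.sech_le_exp _) ?_
    have : -(β*(ρ₂ + L + (3*α^2 - β^2)*t)) ≤ -β * L / 2 := by
      nlinarith [mul_le_mul_of_nonneg_left hv₀ hβ.le]
    have := Real.exp_le_exp.mpr this
    linarith
  have hE : 0 < Real.exp (-β * L / 2) := Real.exp_pos _
  have e1 : ∀ (kk : ℕ) (g : ℝ → ℝ → ℝ),
      (∀ u v, iteratedDeriv kk
          (fun x => (1/Real.cosh (β*(v+x))) * BreatherAux.hfun α β (u+x) (v+x)) 0 =
        (1/Real.cosh (β*v)) * g u v) →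
      (fun a => iteratedDeriv kk (fun y => breather α β a (ρ₂ + L) y t) 0) =
      (fun a => (1/Real.cosh (β*(ρ₂ + L + (3*α^2 - β^2)*t))) *
        g (a + (α^2-3*β^2)*t) (ρ₂ + L + (3*α^2 - β^2)*t)) := by
    intro kk g he
    funext a
    have einner : (fun y => breather α β a (ρ₂ + L) y t) =
        (fun y => (1/Real.cosh (β*((ρ₂ + L + (3*α^2 - β^2)*t)+y))) *
          BreatherAux.hfun α β ((a + (α^2-3*β^2)*t)+y) ((ρ₂ + L + (3*α^2 - β^2)*t)+y)) :=
      funext fun y => BreatherAux.breather_eq α β a (ρ₂ + L) y t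
    rw [einner]
    exact he (a + (α^2-3*β^2)*t) (ρ₂ + L + (3*α^2 - β^2)*t)
  have e2 : ∀ (kk : ℕ) (g : ℝ → ℝ → ℝ),
      (∀ u v, iteratedDeriv kk
          (fun x => (1/Real.cosh (β*(v+x))) * BreatherAux.hfun α β (u+x) (v+x)) 0 =
        (1/Real.cosh (β*v)) * g u v) →
      (fun a => iteratedDeriv kk (fun y => breather α β ρ₁ a y t) 0) =
      (fun a => (1/Real.cosh (β*(a + (3*α^2 - β^2)*t))) *
        g (ρ₁ + (α^2-3*β^2)*t) (a + (3*α^2 - β^2)*t)) := by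
    intro kk g he
    funext a
    have einner : (fun y => breather α β ρ₁ a y t) =
        (fun y => (1/Real.cosh (β*((a + (3*α^2 - β^2)*t)+y))) *
          BreatherAux.hfun α β ((ρ₁ + (α^2-3*β^2)*t)+y) ((a + (3*α^2 - β^2)*t)+y)) :=
      funext fun y => BreatherAux.breather_eq α β ρ₁ a y t
    rw [einner]
    exact he (ρ₁ + (α^2-3*β^2)*t) (a + (3*α^2 - β^2)*t)
  interval_cases k
  · refine ⟨?_, ?_⟩
    · rw [e1 0 g0 he0]
      refine le_trans (BreatherAux.deriv_bound_u hu0 hMu0 ((α^2-3*β^2)*t) _ ρ₁) ?_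
      have h2M : 2*Mu0 ≤ C := by simp only [hCdef, hKdef]; nlinarith [hβK]
      nlinarith [mul_le_mul_of_nonneg_right hsech hMu0n,
        mul_le_mul_of_nonneg_right h2M hE.le]
    · rw [e2 0 g0 he0]
      refine le_trans (BreatherAux.deriv_bound_v hβ.le hv0 hM0 hMv0
        (ρ₁ + (α^2-3*β^2)*t) ((3*α^2-β^2)*t) (ρ₂ + L)) ?_
      have hMK : M0 ≤ K := by simp only [hKdef]; linarith
      have hbMK : β*M0 ≤ β*K := mul_le_mul_of_nonneg_left hMK hβ.le
      have h2M : 2*(β*M0 + Mv0) ≤ C := by simp only [hCdef, hKdef]; nlinarith [hbMK]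
      have hnn : 0 ≤ β*M0 + Mv0 := by positivity
      nlinarith [mul_le_mul_of_nonneg_right hsech hnn,
        mul_le_mul_of_nonneg_right h2M hE.le]
  · refine ⟨?_, ?_⟩
    · rw [e1 1 g1 he1]
      refine le_trans (BreatherAux.deriv_bound_u hu1 hMu1 ((α^2-3*β^2)*t) _ ρ₁) ?_
      have h2M : 2*Mu1 ≤ C := by simp only [hCdef, hKdef]; nlinarith [hβK]
      nlinarith [mul_le_mul_of_nonneg_right hsech hMu1n,
        mul_le_mul_of_nonneg_right h2M hE.le]
    · rw [e2 1 g1 he1]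
      refine le_trans (BreatherAux.deriv_bound_v hβ.le hv1 hM1 hMv1
        (ρ₁ + (α^2-3*β^2)*t) ((3*α^2-β^2)*t) (ρ₂ + L)) ?_
      have hMK : M1 ≤ K := by simp only [hKdef]; linarith
      have hbMK : β*M1 ≤ β*K := mul_le_mul_of_nonneg_left hMK hβ.le
      have h2M : 2*(β*M1 + Mv1) ≤ C := by simp only [hCdef, hKdef]; nlinarith [hbMK]
      have hnn : 0 ≤ β*M1 + Mv1 := by positivity
      nlinarith [mul_le_mul_of_nonneg_right hsech hnn,
        mul_le_mul_of_nonneg_right h2M hE.le]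
  · refine ⟨?_, ?_⟩
    · rw [e1 2 g2 he2]
      refine le_trans (BreatherAux.deriv_bound_u hu2 hMu2 ((α^2-3*β^2)*t) _ ρ₁) ?_
      have h2M : 2*Mu2 ≤ C := by simp only [hCdef, hKdef]; nlinarith [hβK]
      nlinarith [mul_le_mul_of_nonneg_right hsech hMu2n,
        mul_le_mul_of_nonneg_right h2M hE.le]
    · rw [e2 2 g2 he2]
      refine le_trans (BreatherAux.deriv_bound_v hβ.le hv2 hM2 hMv2
        (ρ₁ + (α^2-3*β^2)*t) ((3*α^2-β^2)*t) (ρ₂ + L)) ?_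
      have hMK : M2 ≤ K := by simp only [hKdef]; linarith
      have hbMK : β*M2 ≤ β*K := mul_le_mul_of_nonneg_left hMK hβ.le
      have h2M : 2*(β*M2 + Mv2) ≤ C := by simp only [hCdef, hKdef]; nlinarith [hbMK]
      have hnn : 0 ≤ β*M2 + Mv2 := by positivity
      nlinarith [mul_le_mul_of_nonneg_right hsech hnn,
        mul_le_mul_of_nonneg_right h2M hE.le]
  · refine ⟨?_, ?_⟩
    · rw [e1 3 g3 he3]
      refine le_trans (BreatherAux.deriv_bound_u hu3 hMu3 ((α^2-3*β^2)*t) _ ρ₁) ?_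
      have h2M : 2*Mu3 ≤ C := by simp only [hCdef, hKdef]; nlinarith [hβK]
      nlinarith [mul_le_mul_of_nonneg_right hsech hMu3n,
        mul_le_mul_of_nonneg_right h2M hE.le]
    · rw [e2 3 g3 he3]
      refine le_trans (BreatherAux.deriv_bound_v hβ.le hv3 hM3 hMv3
        (ρ₁ + (α^2-3*β^2)*t) ((3*α^2-β^2)*t) (ρ₂ + L)) ?_
      have hMK : M3 ≤ K := by simp only [hKdef]; linarith
      have hbMK : β*M3 ≤ β*K := mul_le_mul_of_nonneg_left hMK hβ.le
      have h2M : 2*(β*M3 + Mv3) ≤ C := by simp only [hCdef, hKdef]; nlinarith [hbMK]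
      have hnn : 0 ≤ β*M3 + Mv3 := by positivity
      nlinarith [mul_le_mul_of_nonneg_right hsech hnn,
        mul_le_mul_of_nonneg_right h2M hE.le]
end

section
/- Let α, β > 0. There exists a constant C > 0, depending only on α and β, such that for all x₁, x₂ ∈ ℝ and all (x,t) ∈ ℝ²: | ∂_x B̃_{α,β}(x,t;x₁,x₂) | ≤ C · sech(β y₂), where y₂ = x + γt + x₂ and γ = 3α² − β². -/
set_option maxHeartbeats 1000000

open Real Filter MeasureTheory

private lemma abs_mul_le' {a b A B : ℝ} (ha : |a| ≤ A) (hb : |b| ≤ B) : |a*b| ≤ A*B := by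
  rw [abs_mul]; exact mul_le_mul ha hb (abs_nonneg _) ((abs_nonneg _).trans ha)

private lemma key_bound (α β s co th sh ch : ℝ) (hα : 0 < α) (hβ : 0 < β)
    (hs : |s| ≤ 1) (hco : |co| ≤ 1) (hth : |th| ≤ 1) (hch : 1 ≤ ch) (hsh : |sh| ≤ ch) :
    |2*Real.sqrt 2*β * (-(sh*β)/ch^2) * ((co - β/α*s*th) / (1 + (β/α)^2*s^2*(ch^2)⁻¹)) +
      2*Real.sqrt 2*β*ch⁻¹ *
        (((-(s*α) - (β/α*(co*α)*th + β/α*s*(β/ch^2))) * (1 + (β/α)^2*s^2*(ch^2)⁻¹) -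
          (co - β/α*s*th) * ((β/α)^2*(2*s*(co*α))*(ch^2)⁻¹ +
            (β/α)^2*s^2*(2*ch⁻¹*(-(sh*β)/ch^2)))) /
          (1 + (β/α)^2*s^2*(ch^2)⁻¹)^2)| ≤
      (2*Real.sqrt 2*β*( β*(1+β/α) + ((α+β/α*α+β/α*β)*(1+(β/α)^2)
        + (1+β/α)*(2*(β/α)^2*α+2*(β/α)^2*β)))) * ch⁻¹ := by
  have hch0 : (0:ℝ) < ch := lt_of_lt_of_le one_pos hch
  have hch2 : (1:ℝ) ≤ ch^2 := by nlinarith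
  have hse0 : (0:ℝ) < ch⁻¹ := by positivity
  have hse1 : ch⁻¹ ≤ 1 := by
    rw [← one_div]; exact div_le_one_of_le₀ hch hch0.le
  set k := β/α with hk
  have hk0 : 0 < k := div_pos hβ hα
  set D := 1 + k^2*s^2*(ch^2)⁻¹ with hD
  have hD1 : (1:ℝ) ≤ D := le_add_of_nonneg_right (by positivity)
  have hD0 : (0:ℝ) < D := lt_of_lt_of_le one_pos hD1
  have hs2 : s^2 ≤ 1 := by nlinarith [sq_abs s, abs_nonneg s]
  have hinv2 : (ch^2)⁻¹ ≤ 1 := by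
    rw [← one_div]; exact div_le_one_of_le₀ hch2 (by positivity)
  have hinv2' : (0:ℝ) < (ch^2)⁻¹ := by positivity
  have hDub : D ≤ 1 + k^2 := by
    have h1 : s^2 * (ch^2)⁻¹ ≤ 1 := mul_le_one₀ hs2 hinv2'.le hinv2
    have h2 := mul_le_mul_of_nonneg_left h1 (sq_nonneg k)
    rw [hD]; nlinarith [h2]
  -- basic piece bounds
  have habsk : |k| ≤ k := le_of_eq (abs_of_pos hk0)
  have hN : |co - k*s*th| ≤ 1 + k := by
    have h1 : |k*s*th| ≤ k*1*1 := abs_mul_le' (abs_mul_le' habsk hs) hth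
    have := (abs_sub co (k*s*th))
    linarith
  have hsech_b : |-(sh*β)/ch^2| ≤ β*ch⁻¹ := by
    rw [abs_div, abs_neg, abs_mul, abs_of_pos hβ, abs_of_pos (by positivity : (0:ℝ) < ch^2)]
    rw [div_le_iff₀ (by positivity : (0:ℝ) < ch^2)]
    have : β*ch⁻¹*ch^2 = β*ch := by field_simp
    rw [this]
    nlinarith
  have hsech_b1 : |-(sh*β)/ch^2| ≤ β := by
    calc |-(sh*β)/ch^2| ≤ β*ch⁻¹ := hsech_b
    _ ≤ β*1 := mul_le_mul_of_nonneg_left hse1 hβ.le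
    _ = β := by ring
  have hNp : |-(s*α) - (k*(co*α)*th + k*s*(β/ch^2))| ≤ α + k*α + k*β := by
    have h1 : |-(s*α)| ≤ 1*α := by rw [abs_neg]; exact abs_mul_le' hs (le_of_eq (abs_of_pos hα))
    have h2 : |k*(co*α)*th| ≤ k*(1*α)*1 :=
      abs_mul_le' (abs_mul_le' habsk (abs_mul_le' hco (le_of_eq (abs_of_pos hα)))) hth
    have h3 : |β/ch^2| ≤ β := by
      rw [abs_div, abs_of_pos hβ, abs_of_pos (by positivity : (0:ℝ) < ch^2)]
      exact div_le_self hβ.le hch2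
    have h4 : |k*s*(β/ch^2)| ≤ k*1*β := abs_mul_le' (abs_mul_le' habsk hs) h3
    have t1 := abs_sub (-(s*α)) (k*(co*α)*th + k*s*(β/ch^2))
    have t2 := abs_add_le (k*(co*α)*th) (k*s*(β/ch^2))
    linarith
  have hDp : |k^2*(2*s*(co*α))*(ch^2)⁻¹ + k^2*s^2*(2*ch⁻¹*(-(sh*β)/ch^2))| ≤
      2*k^2*α + 2*k^2*β := by
    have hk2 : |k^2| ≤ k^2 := le_of_eq (abs_of_pos (by positivity))
    have h1 : |k^2*(2*s*(co*α))*(ch^2)⁻¹| ≤ k^2*(2*1*(1*α))*1 :=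
      abs_mul_le' (abs_mul_le' hk2 (abs_mul_le'
        (abs_mul_le' (le_of_eq (abs_of_nonneg (by norm_num : (0:ℝ) ≤ 2))) hs)
        (abs_mul_le' hco (le_of_eq (abs_of_pos hα)))))
        (le_of_eq (abs_of_pos hinv2') |>.trans hinv2)
    have hs2' : |s^2| ≤ 1 := by rw [abs_of_nonneg (sq_nonneg s)]; exact hs2
    have h2 : |k^2*s^2*(2*ch⁻¹*(-(sh*β)/ch^2))| ≤ k^2*1*(2*1*β) :=
      abs_mul_le' (abs_mul_le' hk2 hs2') (abs_mul_le'
        (abs_mul_le' (le_of_eq (abs_of_nonneg (by norm_num : (0:ℝ) ≤ 2)))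
          ((le_of_eq (abs_of_pos hse0)).trans hse1)) hsech_b1)
    have t := abs_add_le (k^2*(2*s*(co*α))*(ch^2)⁻¹) (k^2*s^2*(2*ch⁻¹*(-(sh*β)/ch^2)))
    linarith
  -- term A
  have hA : |2*Real.sqrt 2*β * (-(sh*β)/ch^2) * ((co - k*s*th) / D)| ≤
      2*Real.sqrt 2*β * (β*ch⁻¹) * (1+k) := by
    have hc : |2*Real.sqrt 2*β| ≤ 2*Real.sqrt 2*β := le_of_eq (abs_of_pos (by positivity))
    have hQ : |(co - k*s*th)/D| ≤ 1+k := by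
      rw [abs_div, abs_of_pos hD0]
      exact le_trans (div_le_self (abs_nonneg _) hD1) hN
    exact abs_mul_le' (abs_mul_le' hc hsech_b) hQ
  -- term B
  have hB : |2*Real.sqrt 2*β*ch⁻¹ *
      (((-(s*α) - (k*(co*α)*th + k*s*(β/ch^2))) * D -
        (co - k*s*th) * (k^2*(2*s*(co*α))*(ch^2)⁻¹ + k^2*s^2*(2*ch⁻¹*(-(sh*β)/ch^2)))) / D^2)| ≤
      (2*Real.sqrt 2*β*ch⁻¹) * ((α+k*α+k*β)*(1+k^2) + (1+k)*(2*k^2*α+2*k^2*β)) := by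
    have hc : |2*Real.sqrt 2*β*ch⁻¹| ≤ 2*Real.sqrt 2*β*ch⁻¹ := le_of_eq (abs_of_pos (by positivity))
    have hDabs : |D| ≤ 1 + k^2 := by rw [abs_of_pos hD0]; exact hDub
    have h1 : |(-(s*α) - (k*(co*α)*th + k*s*(β/ch^2))) * D| ≤ (α+k*α+k*β)*(1+k^2) :=
      abs_mul_le' hNp hDabs
    have h2 : |(co - k*s*th) * (k^2*(2*s*(co*α))*(ch^2)⁻¹ + k^2*s^2*(2*ch⁻¹*(-(sh*β)/ch^2)))| ≤
        (1+k)*(2*k^2*α+2*k^2*β) := abs_mul_le' hN hDp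
    have hnum : |(-(s*α) - (k*(co*α)*th + k*s*(β/ch^2))) * D -
        (co - k*s*th) * (k^2*(2*s*(co*α))*(ch^2)⁻¹ + k^2*s^2*(2*ch⁻¹*(-(sh*β)/ch^2)))| ≤
        (α+k*α+k*β)*(1+k^2) + (1+k)*(2*k^2*α+2*k^2*β) := by
      have := abs_sub ((-(s*α) - (k*(co*α)*th + k*s*(β/ch^2))) * D)
        ((co - k*s*th) * (k^2*(2*s*(co*α))*(ch^2)⁻¹ + k^2*s^2*(2*ch⁻¹*(-(sh*β)/ch^2))))
      linarith
    have hdd : |(((-(s*α) - (k*(co*α)*th + k*s*(β/ch^2))) * D -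
        (co - k*s*th) * (k^2*(2*s*(co*α))*(ch^2)⁻¹ + k^2*s^2*(2*ch⁻¹*(-(sh*β)/ch^2)))) / D^2)| ≤
        (α+k*α+k*β)*(1+k^2) + (1+k)*(2*k^2*α+2*k^2*β) := by
      rw [abs_div, abs_of_pos (by positivity : (0:ℝ) < D^2)]
      exact le_trans (div_le_self (abs_nonneg _) (by nlinarith)) hnum
    exact abs_mul_le' hc hdd
  calc |2*Real.sqrt 2*β * (-(sh*β)/ch^2) * ((co - k*s*th) / D) +
      2*Real.sqrt 2*β*ch⁻¹ *
        (((-(s*α) - (k*(co*α)*th + k*s*(β/ch^2))) * D -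
          (co - k*s*th) * (k^2*(2*s*(co*α))*(ch^2)⁻¹ + k^2*s^2*(2*ch⁻¹*(-(sh*β)/ch^2)))) / D^2)|
      ≤ 2*Real.sqrt 2*β * (β*ch⁻¹) * (1+k) +
        (2*Real.sqrt 2*β*ch⁻¹) * ((α+k*α+k*β)*(1+k^2) + (1+k)*(2*k^2*α+2*k^2*β)) :=
        le_trans (abs_add_le _ _) (add_le_add hA hB)
    _ = (2*Real.sqrt 2*β*( β*(1+k) + ((α+k*α+k*β)*(1+k^2) + (1+k)*(2*k^2*α+2*k^2*β)))) * ch⁻¹ := by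
        ring


private lemma abs_sinh_le_cosh (z : ℝ) : |Real.sinh z| ≤ Real.cosh z := by
  rw [abs_le]
  constructor
  · nlinarith [Real.cosh_add_sinh z, Real.exp_pos z]
  · nlinarith [Real.cosh_sub_sinh z, Real.exp_pos (-z)]

theorem breather_x_derivative_sech_bound (α β : ℝ) (hα : 0 < α) (hβ : 0 < β) :
    ∃ C > (0:ℝ), ∀ x₁ x₂ x t : ℝ,
      |deriv (fun y => breather α β x₁ x₂ y t) x| ≤
        C * (1 / Real.cosh (β * (x + (3*α^2 - β^2)*t + x₂))) := by
  refine ⟨2*Real.sqrt 2*β*( β*(1+β/α) + ((α+β/α*α+β/α*β)*(1+(β/α)^2)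
      + (1+β/α)*(2*(β/α)^2*α+2*(β/α)^2*β))), by positivity, ?_⟩
  intro x₁ x₂ x t
  have hU : HasDerivAt (fun y : ℝ => α*(y + (α^2-3*β^2)*t + x₁)) α x := by
    simpa using (((hasDerivAt_id x).add_const ((α^2-3*β^2)*t)).add_const x₁).const_mul α
  have hV : HasDerivAt (fun y : ℝ => β*(y + (3*α^2-β^2)*t + x₂)) β x := by
    simpa using (((hasDerivAt_id x).add_const ((3*α^2-β^2)*t)).add_const x₂).const_mul β
  have hsin : HasDerivAt (fun y : ℝ => Real.sin (α*(y + (α^2-3*β^2)*t + x₁)))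
      (Real.cos (α*(x + (α^2-3*β^2)*t + x₁)) * α) x :=
    (Real.hasDerivAt_sin _).comp x hU
  have hcos : HasDerivAt (fun y : ℝ => Real.cos (α*(y + (α^2-3*β^2)*t + x₁)))
      (-Real.sin (α*(x + (α^2-3*β^2)*t + x₁)) * α) x :=
    (Real.hasDerivAt_cos _).comp x hU
  have hcosh : HasDerivAt (fun y : ℝ => Real.cosh (β*(y + (3*α^2-β^2)*t + x₂)))
      (Real.sinh (β*(x + (3*α^2-β^2)*t + x₂)) * β) x :=
    (Real.hasDerivAt_cosh _).comp x hV
  have hsinh : HasDerivAt (fun y : ℝ => Real.sinh (β*(y + (3*α^2-β^2)*t + x₂)))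
      (Real.cosh (β*(x + (3*α^2-β^2)*t + x₂)) * β) x :=
    (Real.hasDerivAt_sinh _).comp x hV
  have hcosh0 : Real.cosh (β*(x + (3*α^2-β^2)*t + x₂)) ≠ 0 := ne_of_gt (Real.cosh_pos _)
  have hsech : HasDerivAt (fun y : ℝ => (Real.cosh (β*(y + (3*α^2-β^2)*t + x₂)))⁻¹)
      (-(Real.sinh (β*(x + (3*α^2-β^2)*t + x₂)) * β) / Real.cosh (β*(x + (3*α^2-β^2)*t + x₂)) ^ 2) x :=
    hcosh.inv hcosh0
  have htanh : HasDerivAt (fun y : ℝ => Real.tanh (β*(y + (3*α^2-β^2)*t + x₂)))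
      (β / Real.cosh (β*(x + (3*α^2-β^2)*t + x₂)) ^ 2) x := by
    have h3 := hsinh.div hcosh hcosh0
    simp only [Pi.div_def, ← Real.tanh_eq_sinh_div_cosh] at h3
    have hnum : Real.cosh (β*(x + (3*α^2-β^2)*t + x₂)) * β * Real.cosh (β*(x + (3*α^2-β^2)*t + x₂))
        - Real.sinh (β*(x + (3*α^2-β^2)*t + x₂)) * (Real.sinh (β*(x + (3*α^2-β^2)*t + x₂)) * β) = β := by
      nlinarith [Real.cosh_sq_sub_sinh_sq (β*(x + (3*α^2-β^2)*t + x₂))]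
    rwa [hnum] at h3
  have hN := hcos.sub ((hsin.const_mul (β/α)).mul htanh)
  have hD := (((hsin.pow 2).const_mul ((β/α)^2)).mul (hsech.pow 2)).const_add 1
  have hD0 : (1 + (β/α)^2 * (Real.sin (α*(x + (α^2-3*β^2)*t + x₁)))^2 *
      ((Real.cosh (β*(x + (3*α^2-β^2)*t + x₂)))⁻¹)^2) ≠ 0 := by positivity
  have hQ := hN.div hD hD0
  have hF := (hsech.const_mul (2*Real.sqrt 2*β)).mul hQ
  have hfun : (fun y => breather α β x₁ x₂ y t) =
      (fun y => 2*Real.sqrt 2*β * (Real.cosh (β*(y + (3*α^2-β^2)*t + x₂)))⁻¹ *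
        ((Real.cos (α*(y + (α^2-3*β^2)*t + x₁)) -
          β/α * Real.sin (α*(y + (α^2-3*β^2)*t + x₁)) * Real.tanh (β*(y + (3*α^2-β^2)*t + x₂))) /
         (1 + (β/α)^2 * (Real.sin (α*(y + (α^2-3*β^2)*t + x₁)))^2 *
            ((Real.cosh (β*(y + (3*α^2-β^2)*t + x₂)))⁻¹)^2))) := by
    funext y; simp only [breather, one_div]
  rw [hfun]; erw [hF.deriv]
  norm_num
  exact key_bound α β (Real.sin (α*(x + (α^2-3*β^2)*t + x₁)))
    (Real.cos (α*(x + (α^2-3*β^2)*t + x₁)))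
    (Real.tanh (β*(x + (3*α^2-β^2)*t + x₂)))
    (Real.sinh (β*(x + (3*α^2-β^2)*t + x₂)))
    (Real.cosh (β*(x + (3*α^2-β^2)*t + x₂))) hα hβ
    (Real.abs_sin_le_one _) (Real.abs_cos_le_one _)
    (by rw [Real.tanh_eq_sinh_div_cosh, abs_div, abs_of_pos (Real.cosh_pos _),
          div_le_one (Real.cosh_pos _)]; exact abs_sinh_le_cosh _)
    (Real.one_le_cosh _) (abs_sinh_le_cosh _)
end
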